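/- arXiv:1902.03213 — 10 statements merged into one kernel-verified Lean document; each statement's English description precedes it below -/
import Mathlib

section
/- Let F be a graph, r ≥ 2, m = min(C(r,2), |E(F)|) and t' = floor(t/m). Then every r-uniform hypergraph that is a t-heavy copy of F contains a subhypergraph that is a t'-wise Berge copy of F. -/
open Finset

/-- `H` contains a `t`-heavy copy of the graph `F`: an injective placement of `V(F)`
such that every edge of `F` is contained in at least `t` hyperedges of `H`. -/
def HasHeavyCopy {V α : Type*} [DecidableEq V] (H : Finset (Finset V))
    (F : SimpleGraph α) (t : ℕ) : Prop :=
  ∃ i : α ↪ V, ∀ x y, F.Adj x y →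
    t ≤ (H.filter (fun A => i x ∈ A ∧ i y ∈ A)).card

/-- `H` contains a `t`-wise Berge copy of the graph `F`: an injective placement of `V(F)`
together with `t` hyperedges assigned to each edge of `F`, pairwise disjoint over distinct
edges, each containing both endpoints of its edge. -/
def HasBergeCopy {V α : Type*} (H : Finset (Finset V))
    (F : SimpleGraph α) (t : ℕ) : Prop :=
  ∃ (i : α ↪ V) (h : Sym2 α → Finset (Finset V)),
    (∀ e ∈ F.edgeSet, h e ⊆ H ∧ (h e).card = t ∧ ∀ A ∈ h e, ∀ x ∈ e, i x ∈ A) ∧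
    ∀ e ∈ F.edgeSet, ∀ e' ∈ F.edgeSet, e ≠ e' → Disjoint (h e) (h e')

/-- The Turán number of `t`-heavy copies of `F` for `r`-uniform hypergraphs on `n` vertices. -/
noncomputable def exHeavy {α : Type*} (n r t : ℕ) (F : SimpleGraph α) : ℕ :=
  sSup {m | ∃ H : Finset (Finset (Fin n)), (∀ A ∈ H, A.card = r) ∧
    ¬ HasHeavyCopy H F t ∧ H.card = m}

/-- The Turán number of `t`-wise Berge copies of `F` for `r`-uniform hypergraphs on `n` vertices. -/
noncomputable def exBerge {α : Type*} (n r t : ℕ) (F : SimpleGraph α) : ℕ :=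
  sSup {m | ∃ H : Finset (Finset (Fin n)), (∀ A ∈ H, A.card = r) ∧
    ¬ HasBergeCopy H F t ∧ H.card = m}

/-- `G` contains a copy of `F` as a subgraph. -/
def GraphContains {α β : Type*} (F : SimpleGraph α) (G : SimpleGraph β) : Prop :=
  ∃ f : α ↪ β, ∀ x y, F.Adj x y → G.Adj (f x) (f y)

/-- The number of `r`-cliques of `G`. -/
noncomputable def cliqueCount {β : Type*} [Fintype β] [DecidableEq β]
    (r : ℕ) (G : SimpleGraph β) : ℕ :=
  letI := Classical.decRel G.Adj
  (G.cliqueFinset r).card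

/-- The number of edges of `G`. -/
noncomputable def edgeCount {β : Type*} [Fintype β] [DecidableEq β] (G : SimpleGraph β) : ℕ :=
  letI := Classical.decRel G.Adj
  G.edgeFinset.card

/-- The generalized Turán number `ex(n, K_r, F)`. -/
noncomputable def exClique {α : Type*} (n r : ℕ) (F : SimpleGraph α) : ℕ :=
  sSup {m | ∃ G : SimpleGraph (Fin n), ¬ GraphContains F G ∧ cliqueCount r G = m}

/-- The Turán number `ex(n, F)`. -/
noncomputable def exTuran {α : Type*} (n : ℕ) (F : SimpleGraph α) : ℕ :=
  sSup {m | ∃ G : SimpleGraph (Fin n), ¬ GraphContains F G ∧ edgeCount G = m}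

theorem heavy_copy_contains_berge {V α : Type*} [DecidableEq V] [Fintype α] [DecidableEq α]
    (F : SimpleGraph α) [DecidableRel F.Adj] (r t : ℕ) (hr : 2 ≤ r)
    (H : Finset (Finset V)) (hunif : ∀ A ∈ H, A.card = r)
    (hheavy : HasHeavyCopy H F t) :
    HasBergeCopy H F (t / min (r.choose 2) F.edgeFinset.card) := by
  classical
  obtain ⟨i, hi⟩ := hheavy
  set m := min (r.choose 2) F.edgeFinset.card with hm
  set t' := t / m with ht'
  -- the link sets
  set S : Sym2 α → Finset (Finset V) :=
    fun e => H.filter (fun A => ∀ x ∈ e, i x ∈ A) with hS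
  have hSsub : ∀ e, S e ⊆ H := fun e => filter_subset _ _
  have hScard : ∀ e ∈ F.edgeFinset, t ≤ (S e).card := by
    intro e he
    induction e with
    | h x y =>
      have hadj : F.Adj x y := by
        simpa [SimpleGraph.mem_edgeFinset] using he
      refine le_trans (hi x y hadj) (Finset.card_le_card ?_)
      intro A hA
      simp only [hS, mem_filter] at hA ⊢
      refine ⟨hA.1, fun z hz => ?_⟩
      rcases Sym2.mem_iff.mp hz with rfl | rfl
      · exact hA.2.1
      · exact hA.2.2
  -- the pair map
  set ψ : Sym2 α → Finset V :=
    Sym2.lift ⟨fun a b => {i a, i b}, fun a b => Finset.pair_comm (i a) (i b)⟩ with hψ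
  -- key per-hyperedge bound
  have hkey : ∀ A ∈ H, ∀ E' ⊆ F.edgeFinset,
      (E'.filter (fun e => A ∈ S e)).card ≤ m := by
    intro A hA E' hE'
    refine le_min ?_ ?_
    · have hAr : A.card = r := hunif A hA
      have := Finset.card_le_card_of_injOn (f := ψ)
        (s := E'.filter (fun e => A ∈ S e)) (t := A.powersetCard 2) ?_ ?_
      · simpa [Finset.card_powersetCard, hAr] using this
      · intro e he
        rw [Finset.mem_coe, mem_filter] at he; rw [Finset.mem_coe]
        obtain ⟨heE, heA⟩ := he
        have heF := hE' heE
        induction e with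
        | h a b =>
          have hadj : F.Adj a b := by
            simpa [SimpleGraph.mem_edgeFinset] using heF
          have hab : a ≠ b := hadj.ne
          simp only [hS, mem_filter] at heA
          have hia : i a ∈ A := heA.2 a (Sym2.mem_mk_left a b)
          have hib : i b ∈ A := heA.2 b (Sym2.mem_mk_right a b)
          rw [Finset.mem_powersetCard]
          constructor
          · intro v hv
            rcases Finset.mem_insert.mp hv with rfl | hv
            · exact hia
            · rw [Finset.mem_singleton] at hv; subst hv
              simpa [hψ] using hib
          · have : ψ s(a, b) = {i a, i b} := by simp [hψ]
            rw [this, Finset.card_insert_of_notMem (by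
              simp only [Finset.mem_singleton]
              exact fun h => hab (i.injective h)), Finset.card_singleton]
      · intro e he e' he' heq
        simp only [Finset.coe_filter, Set.mem_setOf_eq] at he he'
        have heF := hE' he.1
        have heF' := hE' he'.1
        have hadj : ¬ e.IsDiag := by
          rw [SimpleGraph.mem_edgeFinset] at heF
          exact F.not_isDiag_of_mem_edgeSet heF
        have hadj' : ¬ e'.IsDiag := by
          rw [SimpleGraph.mem_edgeFinset] at heF'
          exact F.not_isDiag_of_mem_edgeSet heF'
        clear he he' heF heF'
        induction e with
        | h a b =>
          induction e' with
          | h c d =>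
            have hab : a ≠ b := by simpa using hadj
            have hcd : c ≠ d := by simpa using hadj'
            have heq' : ({i a, i b} : Finset V) = {i c, i d} := by
              simpa [hψ] using heq
            have h1 : i c ∈ ({i a, i b} : Finset V) := by rw [heq']; simp
            have h2 : i d ∈ ({i a, i b} : Finset V) := by rw [heq']; simp
            simp only [Finset.mem_insert, Finset.mem_singleton] at h1 h2
            rcases h1 with h1 | h1 <;> rcases h2 with h2 | h2 <;>
              [skip; skip; skip; skip]
            · exact absurd (i.injective (h1.trans h2.symm)) hcd
            · rw [i.injective h1, i.injective h2]
            · rw [i.injective h1, i.injective h2, Sym2.eq_swap]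
            · exact absurd (i.injective (h1.trans h2.symm)) hcd
    · calc (E'.filter (fun e => A ∈ S e)).card ≤ E'.card :=
            Finset.card_le_card (filter_subset _ _)
        _ ≤ F.edgeFinset.card := Finset.card_le_card hE'
  -- main counting bound
  have hmain : ∀ E' ⊆ F.edgeFinset, t * E'.card ≤ (E'.biUnion S).card * m := by
    intro E' hE'
    have h1 : t * E'.card ≤ ∑ e ∈ E', (S e).card := by
      rw [mul_comm]
      calc E'.card * t = ∑ _e ∈ E', t := by rw [Finset.sum_const, smul_eq_mul]
        _ ≤ ∑ e ∈ E', (S e).card :=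
          Finset.sum_le_sum (fun e he => hScard e (hE' he))
    have h2 : ∑ e ∈ E', (S e).card
        = ∑ A ∈ E'.biUnion S, (E'.filter (fun e => A ∈ S e)).card := by
      calc ∑ e ∈ E', (S e).card
          = ∑ e ∈ E', ((E'.biUnion S).filter (fun A => A ∈ S e)).card := by
            refine Finset.sum_congr rfl fun e he => ?_
            congr 1
            rw [Finset.filter_mem_eq_inter]
            exact (Finset.inter_eq_right.mpr (Finset.subset_biUnion_of_mem S he)).symm
        _ = ∑ e ∈ E', ∑ A ∈ E'.biUnion S, if A ∈ S e then 1 else 0 :=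
            Finset.sum_congr rfl fun e _ => Finset.card_filter _ _
        _ = ∑ A ∈ E'.biUnion S, ∑ e ∈ E', if A ∈ S e then 1 else 0 :=
            Finset.sum_comm
        _ = ∑ A ∈ E'.biUnion S, (E'.filter (fun e => A ∈ S e)).card :=
            Finset.sum_congr rfl fun A _ => (Finset.card_filter _ _).symm
    have h3 : ∑ A ∈ E'.biUnion S, (E'.filter (fun e => A ∈ S e)).card
        ≤ (E'.biUnion S).card * m := by
      calc ∑ A ∈ E'.biUnion S, (E'.filter (fun e => A ∈ S e)).card
          ≤ ∑ _A ∈ E'.biUnion S, m := by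
            refine Finset.sum_le_sum fun A hA => ?_
            obtain ⟨e, _, heA⟩ := Finset.mem_biUnion.mp hA
            exact hkey A (hSsub e heA) E' hE'
        _ = (E'.biUnion S).card * m := by rw [Finset.sum_const, smul_eq_mul]
    exact le_trans h1 (h2 ▸ h3)
  -- Hall condition
  have hall : ∀ s : Finset ({e // e ∈ F.edgeFinset} × Fin t'),
      s.card ≤ (s.biUnion (fun p => S p.1)).card := by
    intro s
    rcases s.eq_empty_or_nonempty with rfl | hne
    · simp
    set E' := s.image (fun p => (p.1 : Sym2 α)) with hE'
    have hE'sub : E' ⊆ F.edgeFinset := by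
      intro e he
      rw [hE', Finset.mem_image] at he
      obtain ⟨p, _, rfl⟩ := he
      exact p.1.2
    have hEne : E'.Nonempty := hne.image _
    have hm0 : 0 < m := by
      refine lt_min (Nat.choose_pos hr) ?_
      exact Finset.card_pos.mpr ⟨_, hE'sub hEne.choose_spec⟩
    have hU : s.biUnion (fun p => S p.1) = E'.biUnion S := by
      rw [hE', Finset.image_biUnion]
    have hscard : s.card ≤ E'.card * t' := by
      have hinj : Function.Injective
          (fun p : {e // e ∈ F.edgeFinset} × Fin t' => ((p.1 : Sym2 α), p.2)) := by
        intro p q hpq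
        simp only [Prod.mk.injEq] at hpq
        exact Prod.ext (Subtype.coe_injective hpq.1) hpq.2
      calc s.card = (s.image (fun p => ((p.1 : Sym2 α), p.2))).card :=
            (Finset.card_image_of_injective s hinj).symm
        _ ≤ (E' ×ˢ (Finset.univ : Finset (Fin t'))).card := by
            refine Finset.card_le_card ?_
            intro q hq
            rw [Finset.mem_image] at hq
            obtain ⟨p, hp, rfl⟩ := hq
            rw [Finset.mem_product]
            exact ⟨Finset.mem_image_of_mem _ hp, Finset.mem_univ _⟩
        _ = E'.card * t' := by
            rw [Finset.card_product, Finset.card_univ, Fintype.card_fin]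
    have h5 : t' * E'.card * m ≤ (E'.biUnion S).card * m := by
      calc t' * E'.card * m = t' * m * E'.card := by ring
        _ ≤ t * E'.card := Nat.mul_le_mul_right _ (Nat.div_mul_le_self t m)
        _ ≤ (E'.biUnion S).card * m := hmain E' hE'sub
    have h6 : t' * E'.card ≤ (E'.biUnion S).card :=
      Nat.le_of_mul_le_mul_right h5 hm0
    rw [hU]
    calc s.card ≤ E'.card * t' := hscard
      _ = t' * E'.card := mul_comm _ _
      _ ≤ (E'.biUnion S).card := h6
  obtain ⟨g, hginj, hg⟩ :=
    (Finset.all_card_le_biUnion_card_iff_exists_injective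
      (fun p : {e // e ∈ F.edgeFinset} × Fin t' => S p.1)).mp hall
  refine ⟨i, fun e => if he : e ∈ F.edgeFinset then
      Finset.univ.image (fun k : Fin t' => g (⟨e, he⟩, k)) else ∅, ?_, ?_⟩
  · intro e he
    have he' : e ∈ F.edgeFinset := SimpleGraph.mem_edgeFinset.mpr he
    simp only [dif_pos he']
    refine ⟨?_, ?_, ?_⟩
    · intro A hA
      rw [Finset.mem_image] at hA
      obtain ⟨k, _, rfl⟩ := hA
      exact hSsub _ (hg (⟨e, he'⟩, k))
    · rw [Finset.card_image_of_injective _ (fun k k' hkk =>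
        congrArg Prod.snd (hginj hkk)), Finset.card_univ, Fintype.card_fin]
    · intro A hA x hx
      rw [Finset.mem_image] at hA
      obtain ⟨k, _, rfl⟩ := hA
      have := hg (⟨e, he'⟩, k)
      simp only [hS, mem_filter] at this
      exact this.2 x hx
  · intro e he e' he'' hne
    have h1 : e ∈ F.edgeFinset := SimpleGraph.mem_edgeFinset.mpr he
    have h2 : e' ∈ F.edgeFinset := SimpleGraph.mem_edgeFinset.mpr he''
    simp only [dif_pos h1, dif_pos h2]
    rw [Finset.disjoint_left]
    intro A hA hA'
    rw [Finset.mem_image] at hA hA'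
    obtain ⟨k, _, hk⟩ := hA
    obtain ⟨k', _, hk'⟩ := hA'
    have : (⟨⟨e, h1⟩, k⟩ : {e // e ∈ F.edgeFinset} × Fin t')
        = ⟨⟨e', h2⟩, k'⟩ := hginj (hk.trans hk'.symm)
    exact hne (congrArg (fun p => (p.1 : Sym2 α)) this)
end

section
/- If t ≥ |V(F)| + |E(F)| − 2, then every 3-uniform hypergraph that is a t-heavy copy of F contains the 3-uniform expansion F^{+3} of F as a subhypergraph. -/
open Finset

theorem heavy_copy_contains_expansion {V α : Type*} [DecidableEq V] [Fintype α] [DecidableEq α]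
    (F : SimpleGraph α) [DecidableRel F.Adj] (t : ℕ)
    (ht : Fintype.card α + F.edgeFinset.card - 2 ≤ t)
    (H : Finset (Finset V)) (hunif : ∀ A ∈ H, A.card = 3)
    (hheavy : HasHeavyCopy H F t) :
    ∃ (i : α ↪ V) (w : Sym2 α → V),
      (∀ e ∈ F.edgeSet, ∀ x : α, w e ≠ i x) ∧
      (∀ e ∈ F.edgeSet, ∀ e' ∈ F.edgeSet, e ≠ e' → w e ≠ w e') ∧
      (∀ e ∈ F.edgeSet, ∃ A ∈ H, w e ∈ A ∧ ∀ x ∈ e, i x ∈ A) := by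
  classical
  obtain ⟨i, hi⟩ := hheavy
  suffices h : ∀ S : Finset (Sym2 α), S ⊆ F.edgeFinset → ∃ w : Sym2 α → V,
      (∀ e ∈ S, ∀ x : α, w e ≠ i x) ∧
      (∀ e ∈ S, ∀ e' ∈ S, e ≠ e' → w e ≠ w e') ∧
      (∀ e ∈ S, ∃ A ∈ H, w e ∈ A ∧ ∀ x ∈ e, i x ∈ A) by
    obtain ⟨w, h1, h2, h3⟩ := h F.edgeFinset Finset.Subset.rfl
    refine ⟨i, w, fun e he x => h1 e (by simpa using he) x,
      fun e he e' he' => h2 e (by simpa using he) e' (by simpa using he'),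
      fun e he => h3 e (by simpa using he)⟩
  intro S
  induction S using Finset.induction with
  | empty =>
    intro _
    rcases isEmpty_or_nonempty α with hα | hα
    · exact ⟨fun e => isEmptyElim (Quot.out e).1, by simp, by simp, by simp⟩
    · obtain ⟨a0⟩ := hα
      exact ⟨fun _ => i a0, by simp, by simp, by simp⟩
  | @insert a s ha ih =>
    revert ha
    induction a using Sym2.ind with
    | _ x y =>
    intro ha hsub
    have hs : s ⊆ F.edgeFinset := (Finset.subset_insert _ _).trans hsub
    obtain ⟨w, h1, h2, h3⟩ := ih hs
    have hmem : s(x, y) ∈ F.edgeFinset := hsub (Finset.mem_insert_self _ _)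
    have hadj : F.Adj x y := by
      rw [SimpleGraph.mem_edgeFinset, SimpleGraph.mem_edgeSet] at hmem
      exact hmem
    have hxy : i x ≠ i y := fun h => hadj.ne (i.injective h)
    set T := H.filter (fun A => i x ∈ A ∧ i y ∈ A) with hT
    have htcard : t ≤ T.card := hi x y hadj
    -- each A in T is determined by its third vertex
    have key : ∀ A ∈ T, ∀ v ∈ A \ ({i x, i y} : Finset V),
        A = insert (i x) (insert (i y) {v}) := by
      intro A hA v hv
      rw [hT, Finset.mem_filter] at hA
      obtain ⟨hAH, hxA, hyA⟩ := hA
      rw [Finset.mem_sdiff, Finset.mem_insert, Finset.mem_singleton] at hv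
      push_neg at hv
      obtain ⟨hvA, hvx, hvy⟩ := hv
      have hsub' : insert (i x) (insert (i y) ({v} : Finset V)) ⊆ A := by
        intro z hz
        simp only [Finset.mem_insert, Finset.mem_singleton] at hz
        rcases hz with rfl | rfl | rfl
        · exact hxA
        · exact hyA
        · exact hvA
      have hcard : (insert (i x) (insert (i y) ({v} : Finset V))).card = 3 := by
        rw [Finset.card_insert_of_notMem (by simp [hxy, Ne.symm hvx]),
          Finset.card_insert_of_notMem (by simp [Ne.symm hvy])]
        simp
      exact (Finset.eq_of_subset_of_card_le hsub' (by rw [hunif A hAH, hcard])).symm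
    -- the candidate third vertices
    set C := T.biUnion (fun A => A \ ({i x, i y} : Finset V)) with hC
    have hdisj : ∀ A ∈ T, ∀ B ∈ T, A ≠ B →
        Disjoint (A \ ({i x, i y} : Finset V)) (B \ ({i x, i y} : Finset V)) := by
      intro A hA B hB hne
      rw [Finset.disjoint_left]
      intro v hvA hvB
      exact hne ((key A hA v hvA).trans (key B hB v hvB).symm)
    have hCcard : t ≤ C.card := by
      rw [hC, Finset.card_biUnion hdisj]
      calc t ≤ T.card := htcard
        _ = ∑ A ∈ T, 1 := by simp
        _ ≤ ∑ A ∈ T, (A \ ({i x, i y} : Finset V)).card := by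
            apply Finset.sum_le_sum
            intro A hA
            rw [Finset.mem_filter] at hA
            obtain ⟨hAH, hxA, hyA⟩ := hA
            rw [Nat.one_le_iff_ne_zero, ← Nat.pos_iff_ne_zero, Finset.card_pos]
            have : ({i x, i y} : Finset V) ⊆ A := by
              intro z hz
              simp only [Finset.mem_insert, Finset.mem_singleton] at hz
              rcases hz with rfl | rfl
              · exact hxA
              · exact hyA
            have h2 : ({i x, i y} : Finset V).card = 2 := by
              rw [Finset.card_insert_of_notMem (by simp [hxy])]; simp
            have := Finset.card_sdiff_of_subset this
            rw [h2, hunif A hAH] at this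
            rw [← Finset.card_pos] at *
            omega
    -- the forbidden vertices
    set Fb := ((Finset.univ.image i) \ ({i x, i y} : Finset V)) ∪ s.image w with hFb
    have hFbcard : Fb.card < t := by
      have h2 : ({i x, i y} : Finset V) ⊆ Finset.univ.image i := by
        intro z hz
        simp only [Finset.mem_insert, Finset.mem_singleton] at hz
        rcases hz with rfl | rfl <;> exact Finset.mem_image_of_mem i (Finset.mem_univ _)
      have hc2 : ({i x, i y} : Finset V).card = 2 := by
        rw [Finset.card_insert_of_notMem (by simp [hxy])]; simp
      have hiu : (Finset.univ.image i).card = Fintype.card α :=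
        Finset.card_image_of_injective _ i.injective |>.trans (by simp)
      have hca : 2 ≤ Fintype.card α := by
        rw [← hc2, ← hiu]; exact Finset.card_le_card h2
      have hd : ((Finset.univ.image i) \ ({i x, i y} : Finset V)).card
          = Fintype.card α - 2 := by
        rw [Finset.card_sdiff_of_subset h2, hc2, hiu]
      have hsc : s.card ≤ F.edgeFinset.card - 1 := by
        have : s ⊆ F.edgeFinset.erase s(x, y) := fun e he =>
          Finset.mem_erase.mpr ⟨fun h => ha (h ▸ he), hs he⟩
        have := Finset.card_le_card this
        rw [Finset.card_erase_of_mem hmem] at this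
        exact this
      have he1 : 1 ≤ F.edgeFinset.card := Finset.card_pos.mpr ⟨_, hmem⟩
      calc Fb.card ≤ ((Finset.univ.image i) \ ({i x, i y} : Finset V)).card
            + (s.image w).card := Finset.card_union_le _ _
        _ ≤ (Fintype.card α - 2) + s.card := by
            rw [hd]; exact Nat.add_le_add_left (Finset.card_image_le) _
        _ < t := by omega
    -- pick a fresh vertex
    have hex : (C \ Fb).Nonempty := by
      rw [← Finset.card_pos]
      have := Finset.le_card_sdiff Fb C
      omega
    obtain ⟨v, hv⟩ := hex
    rw [Finset.mem_sdiff] at hv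
    obtain ⟨hvC, hvFb⟩ := hv
    rw [hC, Finset.mem_biUnion] at hvC
    obtain ⟨A, hAT, hvA⟩ := hvC
    have hAfacts := hAT
    rw [hT, Finset.mem_filter] at hAfacts
    obtain ⟨hAH, hxA, hyA⟩ := hAfacts
    rw [Finset.mem_sdiff, Finset.mem_insert, Finset.mem_singleton] at hvA
    push_neg at hvA
    obtain ⟨hvA, hvx, hvy⟩ := hvA
    refine ⟨Function.update w s(x, y) v, ?_, ?_, ?_⟩
    · intro e he z
      rw [Finset.mem_insert] at he
      rcases he with rfl | he
      · rw [Function.update_self]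
        intro hzv
        by_cases hz : z = x ∨ z = y
        · rcases hz with rfl | rfl
          · exact hvx hzv
          · exact hvy hzv
        · push_neg at hz
          apply hvFb
          rw [hFb, Finset.mem_union]
          left
          rw [hzv, Finset.mem_sdiff]
          refine ⟨Finset.mem_image_of_mem i (Finset.mem_univ _), ?_⟩
          simp only [Finset.mem_insert, Finset.mem_singleton]
          push_neg
          exact ⟨fun h => hz.1 (i.injective h), fun h => hz.2 (i.injective h)⟩
      · rw [Function.update_of_ne (by rintro rfl; exact ha he)]
        exact h1 e he z
    · intro e he e' he' hne
      rw [Finset.mem_insert] at he he'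
      have hfresh : ∀ e'' ∈ s, v ≠ w e'' := by
        intro e'' he'' hveq
        apply hvFb
        rw [hFb, Finset.mem_union]
        right
        rw [hveq]
        exact Finset.mem_image_of_mem w he''
      rcases he with rfl | he <;> rcases he' with rfl | he'
      · exact absurd rfl hne
      · rw [Function.update_self, Function.update_of_ne (by rintro rfl; exact ha he')]
        exact hfresh e' he'
      · rw [Function.update_self, Function.update_of_ne (by rintro rfl; exact ha he)]
        exact fun h => hfresh e he h.symm
      · rw [Function.update_of_ne (by rintro rfl; exact ha he),
          Function.update_of_ne (by rintro rfl; exact ha he')]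
        exact h2 e he e' he' hne
    · intro e he
      rw [Finset.mem_insert] at he
      rcases he with rfl | he
      · refine ⟨A, hAH, ?_, ?_⟩
        · rw [Function.update_self]; exact hvA
        · intro z hz
          rw [Sym2.mem_iff] at hz
          rcases hz with rfl | rfl
          · exact hxA
          · exact hyA
      · rw [Function.update_of_ne (by rintro rfl; exact ha he)]
        exact h3 e he
end

section
/- For any graph F, any r ≥ 3 and t ≥ 2, ex_r(n, B_t F) ≤ ex_r(n, B_{t−1} F) + C(n,2). -/
open Finset

theorem exBerge_recursion {α : Type*} (F : SimpleGraph α) (n r t : ℕ)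
    (hr : 3 ≤ r) (ht : 2 ≤ t) :
    exBerge n r t F ≤ exBerge n r (t - 1) F + n.choose 2 := by
  classical
  apply csSup_le'
  rintro m ⟨H, hunif, hfree, rfl⟩
  -- maximum matching between non-diagonal pairs and hyperedges containing them
  set P : Finset (Sym2 (Fin n) × Finset (Fin n)) → Prop := fun M =>
    (∀ q ∈ M, ¬ q.1.IsDiag ∧ q.2 ∈ H ∧ ∀ v ∈ q.1, v ∈ q.2) ∧
    (∀ q ∈ M, ∀ q' ∈ M, q.1 = q'.1 → q = q') ∧
    (∀ q ∈ M, ∀ q' ∈ M, q.2 = q'.2 → q = q') with hPdef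
  obtain ⟨M, hMmem, hMmax⟩ := Finset.exists_max_image
    ((Finset.univ : Finset (Finset (Sym2 (Fin n) × Finset (Fin n)))).filter P) Finset.card
    ⟨∅, by simp [hPdef]⟩
  rw [Finset.mem_filter] at hMmem
  obtain ⟨-, hM1, hM2, hM3⟩ := hMmem
  set H' : Finset (Finset (Fin n)) := H \ M.image Prod.snd with hH'def
  have hsub' : H' ⊆ H := Finset.sdiff_subset
  -- H' is B_{t-1} F-free
  have hfree' : ¬ HasBergeCopy H' F (t - 1) := by
    rintro ⟨i, h, h1, h2⟩
    apply hfree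
    have key : ∀ e ∈ F.edgeSet, ∃ A, (Sym2.map i e, A) ∈ M := by
      intro e he
      by_contra hno
      push_neg at hno
      obtain ⟨hsub, hcard, hmemv⟩ := h1 e he
      have hne : (h e).Nonempty := by
        rw [← Finset.card_pos, hcard]; omega
      obtain ⟨A, hA⟩ := hne
      have hAH' : A ∈ H' := hsub hA
      have hdiag : ¬ (Sym2.map i e).IsDiag :=
        fun hd => (F.not_isDiag_of_mem_edgeSet he) ((Sym2.isDiag_map i.injective).mp hd)
      have hnoA : (Sym2.map i e, A) ∉ M := hno A
      have hins : insert (Sym2.map i e, A) M ∈ Finset.univ.filter P := by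
        rw [Finset.mem_filter]
        refine ⟨Finset.mem_univ _, ?_, ?_, ?_⟩
        · intro q hq
          rcases Finset.mem_insert.mp hq with rfl | hq
          · refine ⟨hdiag, hsub' hAH', ?_⟩
            intro v hv
            obtain ⟨x, hx, rfl⟩ := Sym2.mem_map.mp hv
            exact hmemv A hA x hx
          · exact hM1 q hq
        · intro q hq q' hq' hfst
          rcases Finset.mem_insert.mp hq with rfl | hq <;>
            rcases Finset.mem_insert.mp hq' with rfl | hq'
          · rfl
          · refine absurd hq' ?_
            have hfst' : Sym2.map (⇑i) e = q'.1 := hfst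
            have := hno q'.2
            rwa [hfst', Prod.mk.eta] at this
          · refine absurd hq ?_
            have hfst' : q.1 = Sym2.map (⇑i) e := hfst
            have := hno q.2
            rwa [← hfst', Prod.mk.eta] at this
          · exact hM2 q hq q' hq' hfst
        · intro q hq q' hq' hsnd
          rcases Finset.mem_insert.mp hq with rfl | hq <;>
            rcases Finset.mem_insert.mp hq' with rfl | hq'
          · rfl
          · have hsnd' : A = q'.2 := hsnd
            exact absurd (Finset.mem_image_of_mem Prod.snd hq')
              (hsnd' ▸ (Finset.mem_sdiff.mp hAH').2)
          · have hsnd' : q.2 = A := hsnd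
            refine absurd (Finset.mem_image_of_mem Prod.snd hq) ?_
            have := (Finset.mem_sdiff.mp hAH').2
            rwa [← hsnd'] at this
          · exact hM3 q hq q' hq' hsnd
      have := hMmax _ hins
      rw [Finset.card_insert_of_notMem hnoA] at this
      omega
    choose g hg using key
    refine ⟨i, fun e => if he : e ∈ F.edgeSet then insert (g e he) (h e) else ∅, ?_, ?_⟩
    · intro e he
      simp only [dif_pos he]
      obtain ⟨hsub, hcard, hmemv⟩ := h1 e he
      obtain ⟨-, hgH, hgv⟩ := hM1 _ (hg e he)
      have hgnot : g e he ∉ h e := by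
        intro hc
        exact (Finset.mem_sdiff.mp (hsub hc)).2
          (Finset.mem_image_of_mem Prod.snd (hg e he))
      refine ⟨?_, ?_, ?_⟩
      · intro A hA
        rcases Finset.mem_insert.mp hA with rfl | hA
        · exact hgH
        · exact hsub' (hsub hA)
      · rw [Finset.card_insert_of_notMem hgnot, hcard]; omega
      · intro A hA x hx
        rcases Finset.mem_insert.mp hA with rfl | hA
        · exact hgv (i x) (Sym2.mem_map.mpr ⟨x, hx, rfl⟩)
        · exact hmemv A hA x hx
    · intro e he e' he' hne
      simp only [dif_pos he, dif_pos he']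
      have hmapne : Sym2.map i e ≠ Sym2.map i e' :=
        fun hc => hne (Sym2.map.injective i.injective hc)
      have hgne : g e he ≠ g e' he' := by
        intro hc
        have hq2 := hM3 _ (hg e he) _ (hg e' he') hc
        exact hmapne (congrArg Prod.fst hq2)
      have hdisj := h2 e he e' he' hne
      have hnotin : ∀ (e₁ : Sym2 α) (he₁ : e₁ ∈ F.edgeSet) (e₂ : Sym2 α)
          (he₂ : e₂ ∈ F.edgeSet), g e₁ he₁ ∉ h e₂ := by
        intro e₁ he₁ e₂ he₂ hc
        exact (Finset.mem_sdiff.mp ((h1 e₂ he₂).1 hc)).2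
          (Finset.mem_image_of_mem Prod.snd (hg e₁ he₁))
      rw [Finset.disjoint_left]
      intro A hA hA'
      rcases Finset.mem_insert.mp hA with rfl | hA
      · rcases Finset.mem_insert.mp hA' with h' | hA'
        · exact hgne h'
        · exact hnotin e he e' he' hA'
      · rcases Finset.mem_insert.mp hA' with rfl | hA'
        · exact hnotin e' he' e he hA
        · exact (Finset.disjoint_left.mp hdisj hA) hA'
  -- cardinality accounting
  have hMcard : M.card ≤ n.choose 2 := by
    have hinj : Set.InjOn Prod.fst ↑M := fun q hq q' hq' => hM2 q hq q' hq'
    calc M.card = (M.image Prod.fst).card := (Finset.card_image_of_injOn hinj).symm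
      _ ≤ (Finset.univ.filter fun p : Sym2 (Fin n) => ¬ p.IsDiag).card := by
          apply Finset.card_le_card
          intro p hp
          obtain ⟨q, hq, rfl⟩ := Finset.mem_image.mp hp
          exact Finset.mem_filter.mpr ⟨Finset.mem_univ _, (hM1 q hq).1⟩
      _ = n.choose 2 := by
          rw [← Fintype.card_subtype, Sym2.card_subtype_not_diag, Fintype.card_fin]
  have hbdd : BddAbove {m | ∃ H'' : Finset (Finset (Fin n)), (∀ A ∈ H'', A.card = r) ∧
      ¬ HasBergeCopy H'' F (t - 1) ∧ H''.card = m} := by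
    refine ⟨Fintype.card (Finset (Fin n)), ?_⟩
    rintro m ⟨H'', -, -, rfl⟩
    exact Finset.card_le_univ H''
  have hle : H'.card ≤ exBerge n r (t - 1) F :=
    le_csSup hbdd ⟨H', fun A hA => hunif A (hsub' hA), hfree', rfl⟩
  calc H.card ≤ H'.card + (M.image Prod.snd).card := Finset.card_le_card_sdiff_add_card
    _ ≤ H'.card + M.card := by gcongr; exact Finset.card_image_le
    _ ≤ exBerge n r (t - 1) F + n.choose 2 := by gcongr
end

section
/- For any graph F and integer t ≥ 1, there is a constant C = C(F, t) such that if H is a hypergraph on n vertices containing no t-wise Berge copy of F and every hyperedge of H has size at least |V(F)|, then the sum over hyperedges H' of H of |H'|² is at most C·n². -/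
open Finset

/-- Greedy choice of pairwise disjoint `t`-subsets from large enough pools,
avoiding a forbidden set `B`. -/
lemma greedy_disjoint {V β : Type*} [DecidableEq β] [DecidableEq (Finset V)] (t : ℕ)
    (E : Finset β) (P : β → Finset (Finset V)) :
    ∀ B : Finset (Finset V), (∀ e ∈ E, t * E.card + B.card ≤ (P e).card) →
    ∃ S : β → Finset (Finset V),
      (∀ e ∈ E, S e ⊆ P e ∧ (S e).card = t ∧ Disjoint (S e) B) ∧
      (∀ e ∈ E, ∀ e' ∈ E, e ≠ e' → Disjoint (S e) (S e')) := by
  induction E using Finset.induction_on with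
  | empty => exact fun B _ => ⟨fun _ => ∅, by simp, by simp⟩
  | @insert a E ha IH =>
    intro B hp
    have hcard : (insert a E).card = E.card + 1 := card_insert_of_notMem ha
    have hp' : ∀ e ∈ insert a E, t * E.card + t + B.card ≤ (P e).card := by
      intro e he
      have h1 := hp e he
      rw [hcard, Nat.mul_succ] at h1
      omega
    have hta : t ≤ ((P a) \ B).card := by
      have h1 := hp' a (mem_insert_self a E)
      have h2 := le_card_sdiff B (P a)
      omega
    obtain ⟨Sa, hSa_sub, hSa_card⟩ := Finset.exists_subset_card_eq hta
    obtain ⟨S', hS'1, hS'2⟩ := IH (B ∪ Sa) (fun e he => by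
      have h1 := hp' e (mem_insert_of_mem he)
      have h2 : (B ∪ Sa).card ≤ B.card + t := le_trans (card_union_le _ _) (by omega)
      omega)
    have hSaB : Disjoint Sa B := by
      rw [Finset.disjoint_left]
      intro x hx hxB
      exact (Finset.mem_sdiff.mp (hSa_sub hx)).2 hxB
    have hmem : ∀ e ∈ insert a E, e ≠ a → e ∈ E := by
      intro e he hne
      rcases mem_insert.mp he with h | h
      · exact absurd h hne
      · exact h
    refine ⟨fun e => if e = a then Sa else S' e, ?_, ?_⟩
    · intro e he
      by_cases hea : e = a
      · simp only [if_pos hea]; rw [hea]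
        exact ⟨hSa_sub.trans (sdiff_subset), hSa_card, hSaB⟩
      · simp only [if_neg hea]
        obtain ⟨h1, h2, h3⟩ := hS'1 e (hmem e he hea)
        exact ⟨h1, h2, h3.mono_right subset_union_left⟩
    · intro e he e' he' hne
      by_cases hea : e = a <;> by_cases hea' : e' = a
      · exact absurd (hea.trans hea'.symm) hne
      · simp only [if_pos hea, if_neg hea']
        exact (((hS'1 e' (hmem e' he' hea')).2.2).mono_right subset_union_right).symm
      · simp only [if_neg hea, if_pos hea']
        exact ((hS'1 e (hmem e he hea)).2.2).mono_right subset_union_right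
      · simp only [if_neg hea, if_neg hea']
        exact hS'2 e (hmem e he hea) e' (hmem e' he' hea') hne

/-- Weak Turán bound: if no `(j+2)`-subset of `s` has all of its pairs satisfying `P`,
then the number of pairs in `s` satisfying `P` is at most `(j/(2(j+1))) * |s|^2`. -/
lemma turan_aux {γ : Type*} [DecidableEq γ] (j : ℕ) (P : Finset γ → Prop) [DecidablePred P] :
    ∀ s : Finset γ,
      (∀ W ⊆ s, W.card = j + 2 → ¬ (∀ p ∈ Finset.powersetCard 2 W, P p)) →
      2 * (j + 1) * ((Finset.powersetCard 2 s).filter P).card ≤ j * s.card ^ 2 := by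
  induction j with
  | zero =>
    intro s hs
    have h0 : ((Finset.powersetCard 2 s).filter P).card = 0 := by
      rw [Finset.card_eq_zero, Finset.filter_eq_empty_iff]
      intro p hp hP
      rw [Finset.mem_powersetCard] at hp
      refine hs p hp.1 hp.2 (fun q hq => ?_)
      rw [Finset.mem_powersetCard] at hq
      have : q = p := Finset.eq_of_subset_of_card_le hq.1 (by omega)
      rwa [this]
    simp [h0]
  | succ j IH =>
    intro s
    induction s using Finset.strongInduction with
    | _ s IHs =>
    intro hs
    by_cases hW : ∃ W ⊆ s, W.card = j + 2 ∧ ∀ p ∈ Finset.powersetCard 2 W, P p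
    · obtain ⟨W, hWs, hWcard, hWP⟩ := hW
      have hWne : W.Nonempty := by rw [← Finset.card_pos]; omega
      have hss : s \ W ⊂ s := Finset.sdiff_ssubset hWs hWne
      have hplus : s.card = (s \ W).card + (j + 2) := by
        rw [Finset.card_sdiff_of_subset hWs]
        have := Finset.card_le_card hWs
        omega
      have hIH := IHs (s \ W) hss
        (fun W' hW' hc => hs W' (hW'.trans Finset.sdiff_subset) hc)
      -- the crossing pairs
      set R := ((s \ W) ×ˢ W).filter (fun q => P {q.1, q.2}) with hR
      have hfib : ∀ x ∈ s \ W, (W.filter (fun w => P {x, w})).card ≤ j + 1 := by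
        intro x hx
        by_contra hcon
        push_neg at hcon
        have hfle := Finset.card_filter_le W (fun w => P {x, w})
        have hfW : W.filter (fun w => P {x, w}) = W := by
          apply Finset.eq_of_subset_of_card_le (Finset.filter_subset _ _)
          omega
        have hxW : x ∉ W := (Finset.mem_sdiff.mp hx).2
        have hxs : x ∈ s := (Finset.mem_sdiff.mp hx).1
        refine hs (insert x W) (Finset.insert_subset hxs hWs)
          (by rw [Finset.card_insert_of_notMem hxW]; omega) (fun p hp => ?_)
        rw [Finset.mem_powersetCard] at hp
        by_cases hxp : x ∈ p
        · -- p = {x, w}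
          obtain ⟨w, hw⟩ : ∃ w, p.erase x = {w} := by
            rw [← Finset.card_eq_one, Finset.card_erase_of_mem hxp, hp.2]
          have hwmem : w ∈ p.erase x := by rw [hw]; exact Finset.mem_singleton_self w
          have hwx : w ≠ x := (Finset.mem_erase.mp hwmem).1
          have hwp : w ∈ p := (Finset.mem_erase.mp hwmem).2
          have hwW : w ∈ W := by
            rcases Finset.mem_insert.mp (hp.1 hwp) with h | h
            · exact absurd h hwx
            · exact h
          have hpeq : p = {x, w} := by
            rw [← Finset.insert_erase hxp, hw]
          rw [hpeq]
          have hwf : w ∈ W.filter (fun w => P {x, w}) := by rw [hfW]; exact hwW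
          exact (Finset.mem_filter.mp hwf).2
        · have hpW : p ⊆ W := by
            intro y hy
            rcases Finset.mem_insert.mp (hp.1 hy) with h | h
            · exact absurd (h ▸ hy) hxp
            · exact h
          exact hWP p (Finset.mem_powersetCard.mpr ⟨hpW, hp.2⟩)
      have hRcard : R.card ≤ (j + 1) * (s \ W).card := by
        have hmap : ∀ q ∈ R, q.1 ∈ s \ W := fun q hq =>
          (Finset.mem_product.mp (Finset.mem_filter.mp hq).1).1
        rw [Finset.card_eq_sum_card_fiberwise hmap, mul_comm, ← smul_eq_mul,
          ← Finset.sum_const]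
        apply Finset.sum_le_sum
        intro x hx
        have hfx : (R.filter (fun q => q.1 = x)).card
            ≤ (W.filter (fun w => P {x, w})).card := by
          apply Finset.card_le_card_of_injOn (fun q => q.2)
          · intro q hq
            have hq1 := Finset.mem_filter.mp hq
            have hq2 := Finset.mem_filter.mp hq1.1
            have hq3 := Finset.mem_product.mp hq2.1
            rw [Finset.mem_coe, Finset.mem_filter]
            refine ⟨hq3.2, ?_⟩
            rw [← hq1.2]
            exact hq2.2
          · intro q hq q' hq' hqq
            have h1 := (Finset.mem_filter.mp (Finset.mem_coe.mp hq)).2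
            have h2 := (Finset.mem_filter.mp (Finset.mem_coe.mp hq')).2
            exact Prod.ext (h1.trans h2.symm) hqq
        exact hfx.trans (hfib x hx)
      -- splitting the pairs of s
      have hsplit : ((Finset.powersetCard 2 s).filter P).card
          ≤ ((Finset.powersetCard 2 (s \ W)).filter P).card
            + (Finset.powersetCard 2 W).card + R.card := by
        have hsub : (Finset.powersetCard 2 s).filter P
            ⊆ (((Finset.powersetCard 2 (s \ W)).filter P) ∪ Finset.powersetCard 2 W)
              ∪ R.image (fun q => {q.1, q.2}) := by
          intro p hp
          obtain ⟨hp1, hp2⟩ := Finset.mem_filter.mp hp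
          rw [Finset.mem_powersetCard] at hp1
          obtain ⟨a, b, hab, rfl⟩ := Finset.card_eq_two.mp hp1.2
          have has : a ∈ s := hp1.1 (Finset.mem_insert_self _ _)
          have hbs : b ∈ s := hp1.1 (Finset.mem_insert_of_mem (Finset.mem_singleton_self b))
          by_cases haW : a ∈ W <;> by_cases hbW : b ∈ W
          · exact Finset.mem_union_left _ (Finset.mem_union_right _
              (Finset.mem_powersetCard.mpr ⟨Finset.insert_subset haW
                (Finset.singleton_subset_iff.mpr hbW), hp1.2⟩))
          · refine Finset.mem_union_right _ (Finset.mem_image.mpr ⟨(b, a), ?_, ?_⟩)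
            · rw [hR, Finset.mem_filter, Finset.mem_product]
              refine ⟨⟨Finset.mem_sdiff.mpr ⟨hbs, hbW⟩, haW⟩, ?_⟩
              rwa [Finset.pair_comm]
            · exact Finset.pair_comm b a
          · refine Finset.mem_union_right _ (Finset.mem_image.mpr ⟨(a, b), ?_, rfl⟩)
            rw [hR, Finset.mem_filter, Finset.mem_product]
            exact ⟨⟨Finset.mem_sdiff.mpr ⟨has, haW⟩, hbW⟩, hp2⟩
          · refine Finset.mem_union_left _ (Finset.mem_union_left _
              (Finset.mem_filter.mpr ⟨Finset.mem_powersetCard.mpr ⟨?_, hp1.2⟩, hp2⟩))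
            exact Finset.insert_subset (Finset.mem_sdiff.mpr ⟨has, haW⟩)
              (Finset.singleton_subset_iff.mpr (Finset.mem_sdiff.mpr ⟨hbs, hbW⟩))
        calc ((Finset.powersetCard 2 s).filter P).card
            ≤ ((((Finset.powersetCard 2 (s \ W)).filter P) ∪ Finset.powersetCard 2 W)
                ∪ R.image (fun q => {q.1, q.2})).card := Finset.card_le_card hsub
          _ ≤ (((Finset.powersetCard 2 (s \ W)).filter P) ∪ Finset.powersetCard 2 W).card
                + (R.image (fun q => {q.1, q.2})).card := Finset.card_union_le _ _
          _ ≤ (((Finset.powersetCard 2 (s \ W)).filter P).card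
                + (Finset.powersetCard 2 W).card) + R.card :=
              Nat.add_le_add (Finset.card_union_le _ _) Finset.card_image_le
      have hFW : 2 * (Finset.powersetCard 2 W).card = (j + 2) * (j + 1) := by
        rw [Finset.card_powersetCard, hWcard, Nat.choose_two_right,
          show j + 2 - 1 = j + 1 from by omega]
        have h2 : (2 : ℕ) ∣ (j + 2) * (j + 1) := by
          have h := Nat.even_mul_succ_self (j + 1)
          rw [show (j + 1) * (j + 1 + 1) = (j + 2) * (j + 1) from by ring] at h
          exact h.two_dvd
        exact Nat.mul_div_cancel' h2
      -- final arithmetic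
      calc 2 * (j + 1 + 1) * ((Finset.powersetCard 2 s).filter P).card
          = 2 * (j + 2) * ((Finset.powersetCard 2 s).filter P).card := by ring
        _ ≤ 2 * (j + 2) * (((Finset.powersetCard 2 (s \ W)).filter P).card
              + (Finset.powersetCard 2 W).card + R.card) :=
            Nat.mul_le_mul_left _ hsplit
        _ = 2 * (j + 2) * ((Finset.powersetCard 2 (s \ W)).filter P).card
              + (j + 2) * (2 * (Finset.powersetCard 2 W).card)
              + 2 * (j + 2) * R.card := by ring
        _ ≤ (j + 1) * (s \ W).card ^ 2 + (j + 2) * ((j + 2) * (j + 1))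
              + 2 * (j + 2) * ((j + 1) * (s \ W).card) :=
            Nat.add_le_add (Nat.add_le_add hIH (le_of_eq (by rw [hFW])))
              (Nat.mul_le_mul_left _ hRcard)
        _ = (j + 1) * ((s \ W).card + (j + 2)) ^ 2 := by ring
        _ = (j + 1) * s.card ^ 2 := by rw [← hplus]
    · push_neg at hW
      have h2 := IH s (fun W hWs hWc hall => by
        obtain ⟨p, hp1, hp2⟩ := hW W hWs hWc
        exact hp2 (hall p hp1))
      refine Nat.le_of_mul_le_mul_left ?_ (Nat.succ_pos j)
      calc (j + 1) * (2 * (j + 1 + 1) * ((Finset.powersetCard 2 s).filter P).card)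
          = (j + 2) * (2 * (j + 1) * ((Finset.powersetCard 2 s).filter P).card) := by ring
        _ ≤ (j + 2) * (j * s.card ^ 2) := Nat.mul_le_mul_left _ h2
        _ = (j * (j + 2)) * s.card ^ 2 := by ring
        _ ≤ ((j + 1) * (j + 1)) * s.card ^ 2 := Nat.mul_le_mul_right _ (by nlinarith)
        _ = (j + 1) * ((j + 1) * s.card ^ 2) := by ring

/-- If some set `W` of `|V(F)|` vertices has every pair contained in at least
`t * |E(F)|` hyperedges, then there is a `t`-wise Berge copy of `F`. -/
lemma berge_of_clique {α V : Type*} [Fintype α] [DecidableEq α] [DecidableEq V]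
    (F : SimpleGraph α) (t : ℕ) (H : Finset (Finset V))
    (W : Finset V) (E : Finset (Sym2 α)) (hE : ∀ e, e ∈ E ↔ e ∈ F.edgeSet)
    (hk : W.card = Fintype.card α)
    (hheavy : ∀ p ∈ Finset.powersetCard 2 W,
      t * E.card ≤ (H.filter (fun A => p ⊆ A)).card) :
    HasBergeCopy H F t := by
  classical
  have hcard : Fintype.card α = Fintype.card {x // x ∈ W} := by
    rw [Fintype.card_coe, hk]
  let eqv : α ≃ {x // x ∈ W} := Fintype.equivOfCardEq hcard
  let i : α ↪ V := eqv.toEmbedding.trans (Function.Embedding.subtype _)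
  have hiW : ∀ x : α, i x ∈ W := fun x => (eqv x).2
  set P : Sym2 α → Finset (Finset V) :=
    fun e => H.filter (fun A => ∀ x ∈ e, i x ∈ A) with hP
  have hpool : ∀ e ∈ E, t * E.card + (∅ : Finset (Finset V)).card
      ≤ (P e).card := by
    intro e he
    induction e with
    | _ x y =>
      have hadj : F.Adj x y := by
        have he' := (hE _).mp he
        rwa [SimpleGraph.mem_edgeSet] at he'
      have hxy : i x ≠ i y := i.injective.ne hadj.ne
      have hpmem : ({i x, i y} : Finset V) ∈ Finset.powersetCard 2 W := by
        rw [Finset.mem_powersetCard]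
        exact ⟨Finset.insert_subset (hiW x) (Finset.singleton_subset_iff.mpr (hiW y)),
          Finset.card_pair hxy⟩
      have hv := hheavy _ hpmem
      have heq : H.filter (fun A => ({i x, i y} : Finset V) ⊆ A) = P s(x, y) := by
        apply Finset.filter_congr
        intro A _
        simp only [Finset.insert_subset_iff, Finset.singleton_subset_iff, Sym2.mem_iff]
        constructor
        · rintro ⟨h1, h2⟩ z (rfl | rfl) <;> assumption
        · intro h
          exact ⟨h x (Or.inl rfl), h y (Or.inr rfl)⟩
      rw [heq] at hv
      simpa using hv
  obtain ⟨S, hS1, hS2⟩ := greedy_disjoint t E P ∅ hpool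
  refine ⟨i, fun e => if e ∈ E then S e else ∅, ?_, ?_⟩
  · intro e he
    have heF : e ∈ E := (hE e).mpr he
    simp only [if_pos heF]
    obtain ⟨h1, h2, _⟩ := hS1 e heF
    refine ⟨h1.trans (Finset.filter_subset _ _), h2, ?_⟩
    intro A hA x hx
    exact (Finset.mem_filter.mp (h1 hA)).2 x hx
  · intro e he e' he' hne
    simp only [if_pos ((hE e).mpr he), if_pos ((hE e').mpr he')]
    exact hS2 e ((hE e).mpr he) e' ((hE e').mpr he') hne

lemma double_count {γ : Type*} [Fintype γ] [DecidableEq γ] (H : Finset (Finset γ))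
    (Q : Finset γ → Prop) [DecidablePred Q] :
    ∑ h ∈ H, ((Finset.powersetCard 2 h).filter Q).card
      = ∑ p ∈ (Finset.powersetCard 2 (univ : Finset γ)).filter Q,
          (H.filter (fun A => p ⊆ A)).card := by
  have key : ∀ h : Finset γ, (Finset.powersetCard 2 h).filter Q
      = ((Finset.powersetCard 2 (univ : Finset γ)).filter Q).filter (fun p => p ⊆ h) := by
    intro h
    ext p
    simp only [Finset.mem_filter, Finset.mem_powersetCard, Finset.subset_univ, true_and]
    tauto
  rw [Finset.sum_congr rfl (fun h _ => by rw [key h])]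
  simp only [Finset.card_filter]
  exact Finset.sum_comm

theorem sum_sq_sizes_quadratic {α : Type*} [Fintype α] (F : SimpleGraph α) (t : ℕ)
    (ht : 1 ≤ t) :
    ∃ C : ℝ, ∀ (n : ℕ) (H : Finset (Finset (Fin n))),
      ¬ HasBergeCopy H F t → (∀ A ∈ H, Fintype.card α ≤ A.card) →
      ∑ A ∈ H, ((A.card : ℝ)) ^ 2 ≤ C * (n : ℝ) ^ 2 := by
  classical
  set k := Fintype.card α with hk
  set m := F.edgeFinset.card with hm
  refine ⟨((4 * (k + 1) ^ 2 * (t * m + 1) : ℕ) : ℝ), ?_⟩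
  intro n H hB hsz
  by_cases hm0 : m = 0
  · -- `F` has no edges, so `H` must be empty
    have hES : F.edgeFinset = ∅ := by
      rw [← Finset.card_eq_zero, ← hm]
      exact hm0
    have hES' : ∀ e, e ∉ F.edgeSet := by
      intro e he
      have h1 := SimpleGraph.mem_edgeFinset.mpr he
      rw [hES] at h1
      exact absurd h1 (Finset.notMem_empty e)
    have hni : ¬ Nonempty (α ↪ Fin n) := by
      rintro ⟨i⟩
      exact hB ⟨i, fun _ => ∅, fun e he => (hES' e he).elim, fun e he => (hES' e he).elim⟩
    have hnk : n < k := by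
      by_contra hcon
      push_neg at hcon
      exact hni ⟨(Fintype.equivFin α).toEmbedding.trans
        (Fin.castLEEmb (by rw [← hk]; exact hcon))⟩
    have hH : H = ∅ := by
      rw [Finset.eq_empty_iff_forall_notMem]
      intro A hA
      have h1 := hsz A hA
      have h2 : A.card ≤ n := le_trans (Finset.card_le_univ A) (by simp)
      omega
    rw [hH]
    simp only [Finset.sum_empty]
    positivity
  · -- main case: `F` has at least one edge
    have hk2 : 2 ≤ k := by
      have hpos : 0 < F.edgeFinset.card := by rw [← hm]; exact Nat.pos_of_ne_zero hm0
      obtain ⟨e, he⟩ := Finset.card_pos.mp hpos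
      obtain ⟨⟨x, y⟩, rfl⟩ := Quot.exists_rep e
      have hadj : F.Adj x y := by
        rwa [show Quot.mk _ (x, y) = s(x, y) from rfl, SimpleGraph.mem_edgeFinset,
          SimpleGraph.mem_edgeSet] at he
      rw [hk]
      exact Fintype.one_lt_card_iff_nontrivial.mpr ⟨x, y, hadj.ne⟩
    set heavyP : Finset (Fin n) → Prop :=
      fun p => t * m ≤ (H.filter (fun A => p ⊆ A)).card with hheavyP
    have hclique : ∀ W : Finset (Fin n), W.card = k →
        ¬ (∀ p ∈ Finset.powersetCard 2 W, heavyP p) := by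
      intro W hW hall
      refine hB (berge_of_clique F t H W F.edgeFinset
        (fun e => SimpleGraph.mem_edgeFinset) (hW.trans hk) ?_)
      intro p hp
      rw [← hm]
      exact hall p hp
    -- Turán bound inside each hyperedge
    have hturan : ∀ h ∈ H, 2 * (k - 1) * ((Finset.powersetCard 2 h).filter heavyP).card
        ≤ (k - 2) * h.card ^ 2 := by
      intro h _
      have h1 := turan_aux (k - 2) heavyP h (fun W _ hWcard => by
        refine hclique W ?_
        omega)
      rwa [show k - 2 + 1 = k - 1 from by omega] at h1
    -- double counting
    set Pairs := Finset.powersetCard 2 (univ : Finset (Fin n)) with hPairs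
    set dp : Finset (Fin n) → ℕ := fun p => (H.filter (fun A => p ⊆ A)).card with hdp
    set Sg := ∑ h ∈ H, (h.card.choose 2) with hSg
    have hSeq : Sg = ∑ p ∈ Pairs, dp p := by
      rw [hSg]
      calc ∑ h ∈ H, (h.card.choose 2)
          = ∑ h ∈ H, ((Finset.powersetCard 2 h).filter (fun _ => True)).card := by
            refine Finset.sum_congr rfl (fun h _ => ?_)
            rw [Finset.filter_true, Finset.card_powersetCard]
        _ = ∑ p ∈ Pairs.filter (fun _ => True), dp p := double_count H (fun _ => True)
        _ = ∑ p ∈ Pairs, dp p := by rw [Finset.filter_true]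
    have hsplitP : ∑ p ∈ Pairs, dp p
        = ∑ p ∈ Pairs.filter heavyP, dp p + ∑ p ∈ Pairs.filter (fun p => ¬ heavyP p), dp p :=
      (Finset.sum_filter_add_sum_filter_not Pairs heavyP dp).symm
    have hPairsCard : Pairs.card = n.choose 2 := by
      rw [hPairs, Finset.card_powersetCard, Finset.card_univ, Fintype.card_fin]
    have hlight : ∑ p ∈ Pairs.filter (fun p => ¬ heavyP p), dp p ≤ n.choose 2 * (t * m) := by
      calc ∑ p ∈ Pairs.filter (fun p => ¬ heavyP p), dp p
          ≤ (Pairs.filter (fun p => ¬ heavyP p)).card • (t * m) := by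
            refine Finset.sum_le_card_nsmul _ _ _ (fun p hp => ?_)
            have h1 := (Finset.mem_filter.mp hp).2
            rw [hheavyP] at h1
            simp only [hdp]
            omega
        _ = (Pairs.filter (fun p => ¬ heavyP p)).card * (t * m) := smul_eq_mul _ _
        _ ≤ n.choose 2 * (t * m) := by
            apply Nat.mul_le_mul_right
            rw [← hPairsCard]
            exact Finset.card_filter_le _ _
    have hheavySum : ∑ p ∈ Pairs.filter heavyP, dp p
        = ∑ h ∈ H, ((Finset.powersetCard 2 h).filter heavyP).card :=
      (double_count H heavyP).symm
    -- per-hyperedge clique bound, rearranged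
    have hheavyBound : ∀ h ∈ H, (k - 1) ^ 2 * ((Finset.powersetCard 2 h).filter heavyP).card
        ≤ k * (k - 2) * (h.card.choose 2) := by
      intro h hh
      have hA := hturan h hh
      have hck : k ≤ h.card := hsz h hh
      have hchoose : 2 * (h.card.choose 2) = h.card * (h.card - 1) := by
        rw [Nat.choose_two_right]
        refine Nat.mul_div_cancel' ?_
        have h2 := Nat.even_mul_succ_self (h.card - 1)
        rw [show h.card - 1 + 1 = h.card from by omega] at h2
        rw [mul_comm] at h2
        exact h2.two_dvd
      have h1k : 1 ≤ k := by omega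
      have h2k : 2 ≤ k := hk2
      have h1c : 1 ≤ h.card := by omega
      zify [h1k, h2k, h1c] at hA hchoose ⊢
      have hc1 : (0 : ℤ) ≤ (h.card : ℤ) := by positivity
      have hc2 : (0 : ℤ) ≤ (h.card : ℤ) - (k : ℤ) := by
        have : (k : ℤ) ≤ (h.card : ℤ) := by exact_mod_cast hck
        omega
      have hc3 : (0 : ℤ) ≤ (k : ℤ) - 2 := by
        have : (2 : ℤ) ≤ (k : ℤ) := by exact_mod_cast h2k
        omega
      have hc4 : (0 : ℤ) ≤ (k : ℤ) - 1 := by omega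
      nlinarith [mul_le_mul_of_nonneg_left hA hc4,
        mul_nonneg (mul_nonneg hc3 hc1) hc2, hchoose]
    have hsum1 : (k - 1) ^ 2 * (∑ h ∈ H, ((Finset.powersetCard 2 h).filter heavyP).card)
        ≤ k * (k - 2) * Sg := by
      rw [Finset.mul_sum, hSg, Finset.mul_sum]
      exact Finset.sum_le_sum hheavyBound
    -- the self-improving inequality
    have hkey : Sg ≤ ∑ h ∈ H, ((Finset.powersetCard 2 h).filter heavyP).card
        + n.choose 2 * (t * m) := by
      rw [hSeq, hsplitP, hheavySum]
      omega
    have hSbound : Sg ≤ (k - 1) ^ 2 * (n.choose 2 * (t * m)) := by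
      have hkk : (k - 1) ^ 2 = k * (k - 2) + 1 := by
        zify [show 1 ≤ k from by omega, show 2 ≤ k from hk2]
        ring
      have hchain : (k - 1) ^ 2 * Sg
          ≤ k * (k - 2) * Sg + (k - 1) ^ 2 * (n.choose 2 * (t * m)) := by
        calc (k - 1) ^ 2 * Sg
            ≤ (k - 1) ^ 2 * (∑ h ∈ H, ((Finset.powersetCard 2 h).filter heavyP).card
                + n.choose 2 * (t * m)) := Nat.mul_le_mul_left _ hkey
          _ = (k - 1) ^ 2 * (∑ h ∈ H, ((Finset.powersetCard 2 h).filter heavyP).card)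
                + (k - 1) ^ 2 * (n.choose 2 * (t * m)) := by ring
          _ ≤ k * (k - 2) * Sg + (k - 1) ^ 2 * (n.choose 2 * (t * m)) :=
              Nat.add_le_add_right hsum1 _
      have hchain' : k * (k - 2) * Sg + Sg
          ≤ k * (k - 2) * Sg + (k - 1) ^ 2 * (n.choose 2 * (t * m)) := by
        calc k * (k - 2) * Sg + Sg = (k * (k - 2) + 1) * Sg := by ring
          _ = (k - 1) ^ 2 * Sg := by rw [hkk]
          _ ≤ _ := hchain
      exact Nat.le_of_add_le_add_left hchain'
    -- from choose 2 back to squares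
    have hsq : ∑ A ∈ H, A.card ^ 2 ≤ 4 * Sg := by
      rw [hSg, Finset.mul_sum]
      refine Finset.sum_le_sum (fun A hA => ?_)
      have hck : k ≤ A.card := hsz A hA
      have hc2 : 2 ≤ A.card := by omega
      have hchoose : 2 * (A.card.choose 2) = A.card * (A.card - 1) := by
        rw [Nat.choose_two_right]
        refine Nat.mul_div_cancel' ?_
        have h2 := Nat.even_mul_succ_self (A.card - 1)
        rw [show A.card - 1 + 1 = A.card from by omega] at h2
        rw [mul_comm] at h2
        exact h2.two_dvd
      zify [show 1 ≤ A.card from by omega] at hchoose ⊢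
      nlinarith [hchoose, show (2 : ℤ) ≤ (A.card : ℤ) from by exact_mod_cast hc2]
    have final_nat : ∑ A ∈ H, A.card ^ 2 ≤ (4 * (k + 1) ^ 2 * (t * m + 1)) * n ^ 2 := by
      calc ∑ A ∈ H, A.card ^ 2 ≤ 4 * Sg := hsq
        _ ≤ 4 * ((k - 1) ^ 2 * (n.choose 2 * (t * m))) := Nat.mul_le_mul_left _ hSbound
        _ ≤ 4 * ((k + 1) ^ 2 * (n ^ 2 * (t * m + 1))) := by
            gcongr
            · omega
            · exact Nat.choose_le_pow n 2
            · omega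
        _ = (4 * (k + 1) ^ 2 * (t * m + 1)) * n ^ 2 := by ring
    exact_mod_cast final_nat
end

section
/- For any graph F and integers r ≥ 2, t ≥ 1: ex(n, K_r, F) ≤ ex_r(n, H_t F) ≤ ex_r(n, B_t F) ≤ ex(n, K_r, F) + ex(n, F) + (t−1)·C(n,2). -/
open Finset

lemma nat_sSup_le' {s : Set ℕ} {n : ℕ} (h : ∀ m ∈ s, m ≤ n) : sSup s ≤ n := by
  rcases s.eq_empty_or_nonempty with rfl | hne
  · simp [csSup_empty]
  · exact csSup_le hne h

lemma nat_sSup_le_sSup' {s t : Set ℕ} (hsub : s ⊆ t) (hb : BddAbove t) :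
    sSup s ≤ sSup t := by
  rcases s.eq_empty_or_nonempty with rfl | hne
  · simp [csSup_empty]
  · exact csSup_le_csSup hb hne hsub

lemma exists_assignment {V : Type*} [DecidableEq V] (t : ℕ) (H : Finset (Finset V)) :
    ∃ h : Sym2 V → Finset (Finset V),
      (∀ p A, A ∈ h p → A ∈ H ∧ ¬ p.IsDiag ∧ ∀ x ∈ p, x ∈ A) ∧
      (∀ p q, p ≠ q → Disjoint (h p) (h q)) ∧
      (∀ p, (h p).card ≤ t) ∧
      (∀ A ∈ H, (∀ p, A ∉ h p) → ∀ x ∈ A, ∀ y ∈ A, x ≠ y →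
        (h s(x,y)).card = t) := by
  classical
  induction H using Finset.induction_on with
  | empty => exact ⟨fun _ => ∅, by simp, by simp, by simp, by simp⟩
  | @insert A S hAS ih =>
    obtain ⟨h, h1, h2, h3, h4⟩ := ih
    have hAfresh : ∀ q, A ∉ h q := fun q hq => hAS ((h1 q A hq).1)
    by_cases hex : ∃ p : Sym2 V, ¬ p.IsDiag ∧ (∀ x ∈ p, x ∈ A) ∧ (h p).card < t
    · obtain ⟨p0, hp0d, hp0m, hp0c⟩ := hex
      refine ⟨Function.update h p0 (insert A (h p0)), ?_, ?_, ?_, ?_⟩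
      · intro p B hB
        by_cases hp : p = p0
        · subst hp
          rw [Function.update_self] at hB
          rcases Finset.mem_insert.mp hB with rfl | hB
          · exact ⟨Finset.mem_insert_self _ _, hp0d, hp0m⟩
          · exact ⟨Finset.mem_insert_of_mem (h1 _ _ hB).1, (h1 _ _ hB).2.1,
              (h1 _ _ hB).2.2⟩
        · rw [Function.update_of_ne hp] at hB
          exact ⟨Finset.mem_insert_of_mem (h1 _ _ hB).1, (h1 _ _ hB).2.1,
            (h1 _ _ hB).2.2⟩
      · intro p q hpq
        by_cases hp : p = p0
        · subst hp
          rw [Function.update_self, Function.update_of_ne (Ne.symm hpq)]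
          exact Finset.disjoint_insert_left.mpr ⟨hAfresh q, h2 _ _ hpq⟩
        · by_cases hq : q = p0
          · subst hq
            rw [Function.update_self, Function.update_of_ne hp]
            exact (Finset.disjoint_insert_left.mpr ⟨hAfresh p, (h2 _ _ hpq).symm⟩).symm
          · rw [Function.update_of_ne hp, Function.update_of_ne hq]
            exact h2 _ _ hpq
      · intro p
        by_cases hp : p = p0
        · subst hp
          rw [Function.update_self]
          calc (insert A (h p)).card ≤ (h p).card + 1 := Finset.card_insert_le _ _
          _ ≤ t := hp0c
        · rw [Function.update_of_ne hp]; exact h3 p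
      · intro B hB hBun x hx y hy hxy
        have hBA : B ≠ A := by
          rintro rfl
          exact hBun p0 (by rw [Function.update_self]; exact Finset.mem_insert_self _ _)
        have hBS : B ∈ S := by
          rcases Finset.mem_insert.mp hB with rfl | h'
          · exact absurd rfl hBA
          · exact h'
        have hBun' : ∀ q, B ∉ h q := by
          intro q hq
          apply hBun q
          by_cases hquse : q = p0
          · subst hquse
            rw [Function.update_self]
            exact Finset.mem_insert_of_mem hq
          · rwa [Function.update_of_ne hquse]
        have hval := h4 B hBS hBun' x hx y hy hxy
        have hne : s(x,y) ≠ p0 := by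
          rintro rfl
          omega
        rw [Function.update_of_ne hne]
        exact hval
    · push_neg at hex
      refine ⟨h, fun p B hB => ⟨Finset.mem_insert_of_mem (h1 _ _ hB).1,
        (h1 _ _ hB).2.1, (h1 _ _ hB).2.2⟩, h2, h3, ?_⟩
      intro B hB hBun x hx y hy hxy
      rcases Finset.mem_insert.mp hB with rfl | hBS
      · have hd : ¬ (s(x,y)).IsDiag := by simp [Sym2.mk_isDiag_iff, hxy]
        have hm : ∀ z ∈ s(x,y), z ∈ B := by
          intro z hz
          rcases Sym2.mem_iff.mp hz with rfl | rfl <;> assumption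
        have h5 := hex s(x,y) hd hm
        have h6 := h3 s(x,y)
        omega
      · exact h4 B hBS hBun x hx y hy hxy

theorem exHeavy_exBerge_sandwich {α : Type*} (F : SimpleGraph α) (n r t : ℕ)
    (hr : 2 ≤ r) (ht : 1 ≤ t) :
    exClique n r F ≤ exHeavy n r t F ∧
    exHeavy n r t F ≤ exBerge n r t F ∧
    exBerge n r t F ≤ exClique n r F + exTuran n F + (t - 1) * n.choose 2 := by
  classical
  refine ⟨?_, ?_, ?_⟩
  · -- exClique ≤ exHeavy
    apply nat_sSup_le_sSup'
    · rintro m ⟨G, hGfree, hm⟩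
      letI := Classical.decRel G.Adj
      refine ⟨G.cliqueFinset r, fun A hA => (SimpleGraph.mem_cliqueFinset_iff.mp hA).2,
        ?_, hm⟩
      rintro ⟨i, hi⟩
      apply hGfree
      refine ⟨i, fun x y hxy => ?_⟩
      have hpos : 0 < ((G.cliqueFinset r).filter
          (fun A => i x ∈ A ∧ i y ∈ A)).card := lt_of_lt_of_le ht (hi x y hxy)
      obtain ⟨A, hA⟩ := Finset.card_pos.mp hpos
      obtain ⟨hAcl, hix, hiy⟩ := Finset.mem_filter.mp hA
      have hne : i x ≠ i y := fun hc => hxy.ne (i.injective hc)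
      exact (SimpleGraph.mem_cliqueFinset_iff.mp hAcl).1 hix hiy hne
    · refine ⟨Fintype.card (Finset (Fin n)), ?_⟩
      rintro m ⟨H, _, _, rfl⟩
      exact Finset.card_le_univ H
  · -- exHeavy ≤ exBerge
    apply nat_sSup_le_sSup'
    · rintro m ⟨H, hunif, hnh, hm⟩
      refine ⟨H, hunif, ?_, hm⟩
      rintro ⟨i, h, hprop, hdisj⟩
      apply hnh
      refine ⟨i, fun x y hxy => ?_⟩
      have he : s(x,y) ∈ F.edgeSet := F.mem_edgeSet.mpr hxy
      obtain ⟨hsub, hcard, hmem⟩ := hprop _ he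
      calc t = (h s(x,y)).card := hcard.symm
      _ ≤ _ := by
        apply Finset.card_le_card
        intro A hA
        refine Finset.mem_filter.mpr ⟨hsub hA, ?_, ?_⟩
        · exact hmem A hA x (Sym2.mem_iff.mpr (Or.inl rfl))
        · exact hmem A hA y (Sym2.mem_iff.mpr (Or.inr rfl))
    · refine ⟨Fintype.card (Finset (Fin n)), ?_⟩
      rintro m ⟨H, _, _, rfl⟩
      exact Finset.card_le_univ H
  · -- exBerge ≤ exClique + exTuran + (t-1) * choose
    apply nat_sSup_le'
    rintro m ⟨H, hunif, hnob, rfl⟩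
    obtain ⟨h, h1, h2, h3, h4⟩ := exists_assignment t H
    set G : SimpleGraph (Fin n) :=
      { Adj := fun x y => x ≠ y ∧ (h s(x,y)).card = t
        symm := by
          constructor
          rintro x y ⟨hxy, hc⟩
          exact ⟨hxy.symm, by rwa [Sym2.eq_swap]⟩
        loopless := ⟨fun x hx => hx.1 rfl⟩ } with hGdef
    letI := Classical.decRel G.Adj
    have hAdj : ∀ x y, G.Adj x y ↔ x ≠ y ∧ (h s(x,y)).card = t := fun x y => Iff.rfl
    -- G is F-free
    have hGfree : ¬ GraphContains F G := by
      rintro ⟨f, hf⟩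
      apply hnob
      refine ⟨f, fun e => h (Sym2.map f e), ?_, ?_⟩
      · intro e he
        induction e using Sym2.ind with
        | _ x y =>
          have hadj := hf x y (F.mem_edgeSet.mp he)
          rw [hAdj] at hadj
          simp only [Sym2.map_pair_eq]
          refine ⟨fun A hA => (h1 _ A hA).1, hadj.2, ?_⟩
          intro A hA z hz
          apply (h1 _ A hA).2.2
          rcases Sym2.mem_iff.mp hz with rfl | rfl
          · exact Sym2.mem_iff.mpr (Or.inl rfl)
          · exact Sym2.mem_iff.mpr (Or.inr rfl)
      · intro e _ e' _ hne
        exact h2 _ _ (fun hc => hne (Sym2.map.injective f.injective hc))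
    -- red and blue hyperedges
    set R := H.filter (fun A => ∀ p, A ∉ h p) with hRdef
    set B := H.filter (fun A => ¬ ∀ p, A ∉ h p) with hBdef
    have hRB : R.card + B.card = H.card :=
      Finset.card_filter_add_card_filter_not _
    -- red hyperedges are cliques of G
    have hRsub : R ⊆ G.cliqueFinset r := by
      intro A hA
      obtain ⟨hAH, hAun⟩ := Finset.mem_filter.mp hA
      rw [SimpleGraph.mem_cliqueFinset_iff]
      refine ⟨?_, hunif A hAH⟩
      intro x hx y hy hxy
      exact (hAdj x y).mpr ⟨hxy, h4 A hAH hAun x hx y hy hxy⟩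
    have hRcard : R.card ≤ exClique n r F := by
      have h5 : R.card ≤ cliqueCount r G := Finset.card_le_card hRsub
      refine le_trans h5 (le_csSup ?_ ⟨G, hGfree, rfl⟩)
      refine ⟨Fintype.card (Finset (Fin n)), ?_⟩
      rintro m ⟨G', _, rfl⟩
      exact Finset.card_le_univ _
    -- blue hyperedges counted by the assignment
    have hB1 : B.card ≤ ∑ p : Sym2 (Fin n), (h p).card := by
      refine le_trans (Finset.card_le_card ?_) Finset.card_biUnion_le
      intro A hA
      have h5 := (Finset.mem_filter.mp hA).2
      push_neg at h5
      obtain ⟨p, hp⟩ := h5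
      exact Finset.mem_biUnion.mpr ⟨p, Finset.mem_univ _, hp⟩
    set E := Finset.univ.filter (fun p : Sym2 (Fin n) => ¬ p.IsDiag) with hEdef
    have hEcard : E.card = n.choose 2 := by
      have h5 := Sym2.card_subtype_not_diag (α := Fin n)
      rwa [Fintype.card_subtype, Fintype.card_fin] at h5
    have hsumE : ∑ p : Sym2 (Fin n), (h p).card = ∑ p ∈ E, (h p).card := by
      symm
      apply Finset.sum_subset (Finset.subset_univ _)
      intro p _ hp
      simp only [hEdef, Finset.mem_filter, Finset.mem_univ, true_and, not_not] at hp
      rw [Finset.card_eq_zero, Finset.eq_empty_iff_forall_notMem]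
      intro A hA
      exact (h1 p A hA).2.1 hp
    set Ef := E.filter (fun p => (h p).card = t) with hEfdef
    have hEfsub : Ef.card ≤ E.card := Finset.card_le_card (Finset.filter_subset _ _)
    have hsplit : ∑ p ∈ E, (h p).card
        = (∑ p ∈ Ef, (h p).card)
          + ∑ p ∈ E.filter (fun p => ¬ (h p).card = t), (h p).card :=
      (Finset.sum_filter_add_sum_filter_not E _ _).symm
    have hEfval : ∑ p ∈ Ef, (h p).card = Ef.card * t := by
      rw [Finset.sum_congr rfl (fun p hp => (Finset.mem_filter.mp hp).2),
        Finset.sum_const, smul_eq_mul]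
    have hEnfcard : (E.filter (fun p => ¬ (h p).card = t)).card = E.card - Ef.card := by
      have h5 : Ef.card + (E.filter (fun p => ¬ (h p).card = t)).card = E.card := by
        rw [hEfdef]
        exact Finset.card_filter_add_card_filter_not _
      omega
    have hEnfval : ∑ p ∈ E.filter (fun p => ¬ (h p).card = t), (h p).card
        ≤ (E.card - Ef.card) * (t - 1) := by
      rw [← hEnfcard, ← smul_eq_mul]
      apply Finset.sum_le_card_nsmul
      intro p hp
      have h5 := h3 p
      have h6 := (Finset.mem_filter.mp hp).2
      omega
    -- Ef is the edge set of G
    have hEfedge : G.edgeFinset = Ef := by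
      ext p
      induction p using Sym2.ind with
      | _ x y =>
        rw [SimpleGraph.mem_edgeFinset, SimpleGraph.mem_edgeSet, hAdj]
        simp only [hEfdef, hEdef, Finset.mem_filter, Finset.mem_univ, true_and,
          Sym2.mk_isDiag_iff]
    have hEfcard : Ef.card ≤ exTuran n F := by
      have h5 : edgeCount G = Ef.card := by
        rw [← hEfedge]; rfl
      rw [← h5]
      refine le_csSup ?_ ⟨G, hGfree, rfl⟩
      refine ⟨Fintype.card (Sym2 (Fin n)), ?_⟩
      rintro m ⟨G', _, rfl⟩
      exact Finset.card_le_univ _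
    -- assemble
    have hBbound : B.card ≤ exTuran n F + (t - 1) * n.choose 2 := by
      obtain ⟨u, rfl⟩ : ∃ u, t = u + 1 := ⟨t - 1, by omega⟩
      have key : Ef.card * (u + 1) + (E.card - Ef.card) * (u + 1 - 1)
          = Ef.card + E.card * u := by
        obtain ⟨d, hd⟩ : ∃ d, E.card = Ef.card + d := ⟨E.card - Ef.card, by omega⟩
        rw [hd]
        simp only [Nat.add_sub_cancel_left, Nat.add_sub_cancel]
        ring
      calc B.card ≤ ∑ p : Sym2 (Fin n), (h p).card := hB1
      _ = (∑ p ∈ Ef, (h p).card)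
          + ∑ p ∈ E.filter (fun p => ¬ (h p).card = (u+1)), (h p).card := by
          rw [hsumE, hsplit]
      _ ≤ Ef.card * (u + 1) + (E.card - Ef.card) * (u + 1 - 1) := by
          rw [hEfval]
          exact Nat.add_le_add_left hEnfval _
      _ = Ef.card + E.card * u := key
      _ ≤ exTuran n F + n.choose 2 * u := by
          rw [hEcard]
          exact Nat.add_le_add_right hEfcard _
      _ = exTuran n F + (u + 1 - 1) * n.choose 2 := by
          simp [Nat.add_sub_cancel, Nat.mul_comm]
    calc H.card = R.card + B.card := hRB.symm
    _ ≤ exClique n r F + (exTuran n F + (t - 1) * n.choose 2) :=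
        Nat.add_le_add hRcard hBbound
    _ = exClique n r F + exTuran n F + (t - 1) * n.choose 2 := by ring
end

section
/- Let r ≥ 3, t ≥ 2, and let F be a connected graph such that F has no vertex cover of size at most (t−1)(r−2). Then the r-uniform hypergraph H on n vertices consisting of all r-sets of the form A_i ∪ {x, y}, where A_1, …, A_{t−1} are fixed pairwise disjoint (r−2)-sets of vertices and x, y are two vertices outside all A_i, contains no t-heavy copy of F, and has (t−1−o(1))·C(n,2) hyperedges. -/
open Finset

/-- The construction: all r-sets consisting of one of the fixed disjoint (r-2)-sets
`A i` together with two vertices outside all the `A j`. -/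
def conH (n r : ℕ) {k : ℕ} (A : Fin k → Finset (Fin n)) : Finset (Finset (Fin n)) :=
  ((Finset.univ : Finset (Fin n)).powersetCard r).filter
    (fun B => ∃ i : Fin k, ∃ x y : Fin n, x ≠ y ∧ (∀ j, x ∉ A j) ∧ (∀ j, y ∉ A j) ∧
      B = A i ∪ {x, y})

lemma conH_card {n r t : ℕ} (hr : 3 ≤ r) (ht : 2 ≤ t)
    (A : Fin (t - 1) → Finset (Fin n))
    (hA : ∀ i, (A i).card = r - 2) (hd : ∀ i j, i ≠ j → Disjoint (A i) (A j)) :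
    (conH n r A).card = (t - 1) * ((n - (t - 1) * (r - 2)).choose 2) := by
  classical
  set U : Finset (Fin n) := Finset.univ.biUnion A with hUdef
  have hxoff : ∀ x : Fin n, x ∈ Uᶜ ↔ ∀ j, x ∉ A j := by
    intro x
    simp [hUdef, Finset.mem_biUnion]
  have hAU : ∀ i, A i ⊆ U := fun i a ha =>
    Finset.mem_biUnion.mpr ⟨i, Finset.mem_univ i, ha⟩
  have hAne : ∀ i, (A i).Nonempty := by
    intro i
    rw [← Finset.card_pos, hA i]
    omega
  have hAeq : ∀ i j, A i = A j → i = j := by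
    intro i j hij
    by_contra h
    have := (hd i j h).eq_bot_of_le (hij ▸ le_rfl)
    exact (hAne i).ne_empty this
  have himg : conH n r A =
      ((Finset.univ : Finset (Fin (t - 1))) ×ˢ (Uᶜ.powersetCard 2)).image
        (fun p => A p.1 ∪ p.2) := by
    ext B
    simp only [conH, Finset.mem_filter, Finset.mem_powersetCard, Finset.mem_image,
      Finset.mem_product]
    constructor
    · rintro ⟨⟨-, hcard⟩, i, x, y, hxy, hx, hy, rfl⟩
      refine ⟨(i, {x, y}), ⟨⟨Finset.mem_univ i, ⟨?_, ?_⟩⟩, rfl⟩⟩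
      · intro a ha
        rw [hxoff]
        rcases Finset.mem_insert.mp ha with rfl | ha
        · exact hx
        · rw [Finset.mem_singleton] at ha; exact ha ▸ hy
      · exact Finset.card_pair hxy
    · rintro ⟨⟨i, p⟩, ⟨-, hp⟩, rfl⟩
      obtain ⟨hpsub, hpcard⟩ := hp
      obtain ⟨x, y, hxy, rfl⟩ := Finset.card_eq_two.mp hpcard
      have hx := (hxoff x).mp (hpsub (Finset.mem_insert_self _ _))
      have hy := (hxoff y).mp (hpsub (by simp))
      have hdisj : Disjoint (A i) ({x, y} : Finset (Fin n)) := by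
        rw [Finset.disjoint_right]
        intro a ha
        rcases Finset.mem_insert.mp ha with rfl | ha
        · exact hx i
        · rw [Finset.mem_singleton] at ha; exact ha ▸ hy i
      refine ⟨⟨Finset.subset_univ _, ?_⟩, i, x, y, hxy, hx, hy, rfl⟩
      rw [Finset.card_union_of_disjoint hdisj, hA i, Finset.card_pair hxy]
      omega
  have hinj : Set.InjOn (fun p : Fin (t - 1) × Finset (Fin n) => A p.1 ∪ p.2)
      (((Finset.univ : Finset (Fin (t - 1))) ×ˢ (Uᶜ.powersetCard 2) : Finset _) : Set _) := by
    rintro ⟨i, p⟩ hip ⟨j, q⟩ hjq heq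
    simp only [Finset.coe_product, Set.mem_prod, Finset.mem_coe,
      Finset.mem_powersetCard] at hip hjq
    obtain ⟨-, hpsub, -⟩ := hip
    obtain ⟨-, hqsub, -⟩ := hjq
    simp only at heq
    have hpU : Disjoint p U := by
      rw [Finset.disjoint_left]; intro a ha; exact Finset.mem_compl.mp (hpsub ha)
    have hqU : Disjoint q U := by
      rw [Finset.disjoint_left]; intro a ha; exact Finset.mem_compl.mp (hqsub ha)
    have hpq : p = q := by
      have h1 : (A i ∪ p) \ U = p := by
        rw [Finset.union_sdiff_distrib, Finset.sdiff_eq_empty_iff_subset.mpr (hAU i),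
          Finset.sdiff_eq_self_of_disjoint hpU, Finset.empty_union]
      have h2 : (A j ∪ q) \ U = q := by
        rw [Finset.union_sdiff_distrib, Finset.sdiff_eq_empty_iff_subset.mpr (hAU j),
          Finset.sdiff_eq_self_of_disjoint hqU, Finset.empty_union]
      rw [← h1, ← h2, heq]
    subst hpq
    have hAij : A i = A j := by
      have h1 : (A i ∪ p) \ p = A i :=
        Finset.union_sdiff_cancel_right (hpU.mono_right (hAU i)).symm
      have h2 : (A j ∪ p) \ p = A j :=
        Finset.union_sdiff_cancel_right (hpU.mono_right (hAU j)).symm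
      rw [← h1, ← h2, heq]
    rw [hAeq i j hAij]
  rw [himg, Finset.card_image_of_injOn hinj, Finset.card_product, Finset.card_univ,
    Fintype.card_fin, Finset.card_powersetCard, Finset.card_compl, Fintype.card_fin]
  congr 2
  rw [Finset.card_biUnion (fun i _ j _ hij => hd i j hij)]
  simp [hA, Finset.sum_const, mul_comm]

theorem conH_no_heavy_copy {α : Type*} (F : SimpleGraph α) (r t : ℕ)
    (hr : 3 ≤ r) (ht : 2 ≤ t) (hconn : F.Connected)
    (hcov : ¬ ∃ S : Finset α, S.card ≤ (t - 1) * (r - 2) ∧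
      ∀ x y, F.Adj x y → x ∈ S ∨ y ∈ S) :
    (∀ (n : ℕ) (A : Fin (t - 1) → Finset (Fin n)),
      (∀ i, (A i).card = r - 2) → (∀ i j, i ≠ j → Disjoint (A i) (A j)) →
      ¬ HasHeavyCopy (conH n r A) F t) ∧
    (∀ ε : ℝ, 0 < ε → ∃ N : ℕ, ∀ n ≥ N, ∀ A : Fin (t - 1) → Finset (Fin n),
      (∀ i, (A i).card = r - 2) → (∀ i j, i ≠ j → Disjoint (A i) (A j)) →
      ((t : ℝ) - 1 - ε) * (n.choose 2) ≤ ((conH n r A).card : ℝ) ∧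
      ((conH n r A).card : ℝ) ≤ ((t : ℝ) - 1 + ε) * (n.choose 2)) := by
  classical
  constructor
  · rintro n A hA hd ⟨i, hi⟩
    set U : Finset (Fin n) := Finset.univ.biUnion A with hUdef
    have hAU : ∀ j, A j ⊆ U := fun j a ha =>
      Finset.mem_biUnion.mpr ⟨j, Finset.mem_univ j, ha⟩
    -- every edge has an endpoint landing in U
    have key : ∀ x y, F.Adj x y → i x ∈ U ∨ i y ∈ U := by
      intro x y hxy
      by_contra h
      push_neg at h
      obtain ⟨hx, hy⟩ := h
      have hixy : i x ≠ i y := fun he => hxy.ne (i.injective he)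
      have hsub : (conH n r A).filter (fun B => i x ∈ B ∧ i y ∈ B) ⊆
          Finset.univ.image (fun j : Fin (t - 1) => A j ∪ {i x, i y}) := by
        intro B hB
        obtain ⟨hBmem, hxB, hyB⟩ := Finset.mem_filter.mp hB
        obtain ⟨-, j, a, b, hab, ha, hb, rfl⟩ := Finset.mem_filter.mp hBmem
        have hxab : i x ∈ ({a, b} : Finset (Fin n)) := by
          rcases Finset.mem_union.mp hxB with h' | h'
          · exact absurd (hAU j h') hx
          · exact h'
        have hyab : i y ∈ ({a, b} : Finset (Fin n)) := by
          rcases Finset.mem_union.mp hyB with h' | h'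
          · exact absurd (hAU j h') hy
          · exact h'
        have hset : ({a, b} : Finset (Fin n)) = {i x, i y} := by
          apply (Finset.eq_of_subset_of_card_le ?_ ?_).symm
          · intro c hc
            rcases Finset.mem_insert.mp hc with rfl | hc
            · exact hxab
            · rw [Finset.mem_singleton] at hc; exact hc ▸ hyab
          · rw [Finset.card_pair hab, Finset.card_pair hixy]
        exact Finset.mem_image.mpr ⟨j, Finset.mem_univ j, by rw [hset]⟩
      have hle : ((conH n r A).filter (fun B => i x ∈ B ∧ i y ∈ B)).card ≤ t - 1 := by
        calc ((conH n r A).filter (fun B => i x ∈ B ∧ i y ∈ B)).card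
            ≤ (Finset.univ.image (fun j : Fin (t - 1) => A j ∪ {i x, i y})).card :=
              Finset.card_le_card hsub
          _ ≤ (Finset.univ : Finset (Fin (t - 1))).card := Finset.card_image_le
          _ = t - 1 := by simp
      have := hi x y hxy
      omega
    -- build a vertex cover
    apply hcov
    refine ⟨Finset.preimage U i (i.injective.injOn), ?_, ?_⟩
    · have h1 : (Finset.preimage U i (i.injective.injOn)).card ≤ U.card :=
        Finset.card_le_card_of_injOn i (fun a ha => Finset.mem_preimage.mp ha)
          (i.injective.injOn)
      have h2 : U.card = (t - 1) * (r - 2) := by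
        rw [hUdef, Finset.card_biUnion (fun i _ j _ hij => hd i j hij)]
        simp [hA, Finset.sum_const, mul_comm]
      omega
    · intro x y hxy
      rcases key x y hxy with h | h
      · exact Or.inl (Finset.mem_preimage.mpr h)
      · exact Or.inr (Finset.mem_preimage.mpr h)
  · intro ε hε
    set c : ℕ := (t - 1) * (r - 2) with hc
    refine ⟨c + 2 + ⌈(2 * ((t : ℝ) - 1) * c) / ε⌉₊, ?_⟩
    intro n hn A hA hd
    rw [conH_card hr ht A hA hd]
    have hcn : c ≤ n := by omega
    have ht1 : ((t - 1 : ℕ) : ℝ) = (t : ℝ) - 1 := by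
      push_cast [Nat.cast_sub (by omega : 1 ≤ t)]; ring
    have hmn : ((n - c : ℕ) : ℝ) = (n : ℝ) - c := by
      push_cast [Nat.cast_sub hcn]; ring
    have hch : ∀ m : ℕ, ((m.choose 2 : ℕ) : ℝ) = (m : ℝ) * ((m : ℝ) - 1) / 2 := by
      intro m
      rcases Nat.eq_zero_or_pos m with rfl | hm
      · simp
      · rw [Nat.choose_two_right]
        rw [Nat.cast_div]
        · push_cast [Nat.cast_sub hm]; ring
        · exact Nat.even_mul_pred_self m |>.two_dvd
        · norm_num
    have hcast : (((t - 1) * ((n - c).choose 2) : ℕ) : ℝ)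
        = ((t : ℝ) - 1) * (((n - c : ℕ).choose 2 : ℕ) : ℝ) := by
      push_cast [ht1]; ring
    have hnN : (2 * ((t : ℝ) - 1) * c) / ε ≤ (n : ℝ) - 1 := by
      have h1 : (⌈(2 * ((t : ℝ) - 1) * c) / ε⌉₊ : ℝ) ≤ (n : ℝ) - 1 := by
        have : (⌈(2 * ((t : ℝ) - 1) * c) / ε⌉₊ : ℕ) + 1 ≤ n := by omega
        have := Nat.cast_le (α := ℝ).mpr this
        push_cast at this
        linarith
      exact le_trans (Nat.le_ceil _) h1
    have hεn : 2 * ((t : ℝ) - 1) * c ≤ ε * ((n : ℝ) - 1) := by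
      rw [div_le_iff₀ hε] at hnN
      linarith [hnN]
    have hn0 : (0 : ℝ) ≤ n := Nat.cast_nonneg n
    have hc0 : (0 : ℝ) ≤ c := Nat.cast_nonneg c
    have hcnR : (c : ℝ) ≤ n := by exact_mod_cast hcn
    have ht0 : (1 : ℝ) ≤ (t : ℝ) := by exact_mod_cast (by omega : 1 ≤ t)
    constructor
    · rw [hcast, hch, hch, hmn]
      nlinarith [mul_nonneg (sub_nonneg.mpr hεn) hn0, mul_nonneg hc0 (sub_nonneg.mpr hcnR),
        mul_nonneg (mul_nonneg (sub_nonneg.mpr ht0) hc0) hc0,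
        mul_nonneg (sub_nonneg.mpr ht0) hc0]
    · rw [hcast]
      have hmono : ((n - c).choose 2 : ℕ) ≤ n.choose 2 :=
        Nat.choose_le_choose 2 (Nat.sub_le n c)
      have h0 : (0 : ℝ) ≤ (n.choose 2 : ℝ) := Nat.cast_nonneg _
      have := Nat.cast_le (α := ℝ).mpr hmono
      nlinarith
end

section
/- For any integers r ≥ 3, t ≥ 2 and k ≥ 2(t−1)(r−2)+2, ex_r(n, H_t P_k) = (t−1−o(1))·C(n,2) and ex_r(n, B_t P_k) = (t−1−o(1))·C(n,2), where P_k is the path on k vertices. -/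
open Finset
open SimpleGraph Filter

def pairGraph {n : ℕ} (E : Finset (Finset (Fin n))) : SimpleGraph (Fin n) where
  Adj u v := u ≠ v ∧ ({u, v} : Finset (Fin n)) ∈ E
  symm := by
    constructor
    intro u v h
    exact ⟨h.1.symm, by rw [Finset.pair_comm]; exact h.2⟩
  loopless := by constructor; intro u h; exact h.1 rfl

instance {n : ℕ} (E : Finset (Finset (Fin n))) : DecidableRel (pairGraph E).Adj := by
  intro u v; unfold pairGraph; simp only; infer_instance


lemma exists_path_of_min_degree {n k : ℕ} (G : SimpleGraph (Fin n)) [DecidableRel G.Adj]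
    (s : Finset (Fin n)) (hs : s.Nonempty) (hk : 1 ≤ k)
    (hdeg : ∀ v ∈ s, k - 1 ≤ (s.filter (G.Adj v)).card) :
    GraphContains (SimpleGraph.pathGraph k) G := by
  -- build paths of every length j ≤ k
  have key : ∀ j, 1 ≤ j → j ≤ k → ∃ f : Fin j → Fin n,
      (∀ a, f a ∈ s) ∧ Function.Injective f ∧
      (∀ a b : Fin j, (a : ℕ) + 1 = (b : ℕ) → G.Adj (f a) (f b)) := by
    intro j
    induction j with
    | zero => omega
    | succ m ih =>
      intro _ hjk
      rcases Nat.eq_zero_or_pos m with hm | hm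
      · subst hm
        obtain ⟨v, hv⟩ := hs
        refine ⟨fun _ => v, fun _ => hv, fun a b hab => by rw [show a = b from Fin.ext (by omega)], ?_⟩
        intro a b hab
        omega
      · obtain ⟨f, hf1, hf2, hf3⟩ := ih hm (le_trans (Nat.le_succ m) hjk)
        -- extend at the endpoint
        set v := f ⟨m - 1, by omega⟩ with hv
        have hvs : v ∈ s := hf1 _
        have hcard : m ≤ (s.filter (G.Adj v)).card := by
          have := hdeg v hvs
          omega
        have hex : ∃ w ∈ s.filter (G.Adj v), w ∉ Finset.univ.image f := by
          by_contra hco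
          push_neg at hco
          have hsub : s.filter (G.Adj v) ⊆ (Finset.univ.image f).erase v := by
            intro w hw
            refine Finset.mem_erase.2 ⟨?_, hco w hw⟩
            rintro rfl
            exact (G.irrefl (Finset.mem_filter.1 hw).2)
          have h1 : ((Finset.univ.image f).erase v).card ≤ m - 1 := by
            have hvmem : v ∈ Finset.univ.image f :=
              Finset.mem_image.2 ⟨_, Finset.mem_univ _, rfl⟩
            have : (Finset.univ.image f).card ≤ m := by
              calc (Finset.univ.image f).card ≤ (Finset.univ : Finset (Fin m)).card :=
                Finset.card_image_le
              _ = m := by simp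
            have := Finset.card_erase_of_mem hvmem
            omega
          have := Finset.card_le_card hsub
          omega
        obtain ⟨w, hw1, hw2⟩ := hex
        refine ⟨Fin.snoc f w, ?_, ?_, ?_⟩
        · intro a
          cases a using Fin.lastCases with
          | last => simpa using (Finset.mem_filter.1 hw1).1
          | cast a => simpa using hf1 a
        · intro a b hab
          cases a using Fin.lastCases with
          | last =>
            cases b using Fin.lastCases with
            | last => rfl
            | cast b =>
              exfalso
              rw [Fin.snoc_last, Fin.snoc_castSucc] at hab
              exact hw2 (Finset.mem_image.2 ⟨b, Finset.mem_univ _, hab.symm⟩)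
          | cast a =>
            cases b using Fin.lastCases with
            | last =>
              exfalso
              rw [Fin.snoc_last, Fin.snoc_castSucc] at hab
              exact hw2 (Finset.mem_image.2 ⟨a, Finset.mem_univ _, hab⟩)
            | cast b =>
              rw [Fin.snoc_castSucc, Fin.snoc_castSucc] at hab
              exact congrArg Fin.castSucc (hf2 hab)
        · intro a b hab
          cases b using Fin.lastCases with
          | last =>
            cases a using Fin.lastCases with
            | last => omega
            | cast a =>
              rw [Fin.snoc_last, Fin.snoc_castSucc]
              have ha : (a : ℕ) = m - 1 := by
                have := a.isLt
                simp only [Fin.coe_castSucc, Fin.val_last] at hab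
                omega
              have haa : a = (⟨m - 1, by omega⟩ : Fin m) := Fin.ext (by simpa using ha)
              rw [haa]
              exact ((Finset.mem_filter.1 hw1).2)
          | cast b =>
            cases a using Fin.lastCases with
            | last =>
              exfalso
              have := b.isLt
              simp only [Fin.val_last, Fin.coe_castSucc] at hab
              omega
            | cast a =>
              rw [Fin.snoc_castSucc, Fin.snoc_castSucc]
              exact hf3 a b (by simpa using hab)
  obtain ⟨f, hf1, hf2, hf3⟩ := key k hk le_rfl
  refine ⟨⟨f, hf2⟩, ?_⟩
  intro x y hxy
  rw [SimpleGraph.pathGraph_adj] at hxy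
  rcases hxy with h | h
  · exact hf3 x y h
  · exact (hf3 y x h).symm


/-- cliques inside `s` -/
def cliquesIn {n : ℕ} (G : SimpleGraph (Fin n)) [DecidableRel G.Adj] (r : ℕ)
    (s : Finset (Fin n)) : Finset (Finset (Fin n)) :=
  (s.powersetCard r).filter (fun A => ∀ u ∈ A, ∀ v ∈ A, u ≠ v → G.Adj u v)

lemma cliquesIn_card_le {n k : ℕ} (G : SimpleGraph (Fin n)) [DecidableRel G.Adj]
    (hk : 1 ≤ k) (hfree : ¬ GraphContains (SimpleGraph.pathGraph k) G)
    (r : ℕ) (hr : 1 ≤ r) (s : Finset (Fin n)) :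
    (cliquesIn G r s).card ≤ k.choose (r - 1) * s.card := by
  induction s using Finset.strongInduction with
  | _ s ih =>
    rcases Finset.eq_empty_or_nonempty s with rfl | hs
    · have he : cliquesIn G r ∅ = ∅ := by
        rw [Finset.eq_empty_iff_forall_notMem]
        intro A hA
        rw [cliquesIn, Finset.mem_filter, Finset.mem_powersetCard] at hA
        obtain ⟨⟨h1, h2⟩, -⟩ := hA
        rw [Finset.subset_empty] at h1
        subst h1
        simp at h2
        omega
      simp [he]
    · -- find a vertex of small degree
      have hv : ∃ v ∈ s, (s.filter (G.Adj v)).card < k - 1 := by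
        by_contra hco
        push_neg at hco
        exact hfree (exists_path_of_min_degree G s hs hk hco)
      obtain ⟨v, hvs, hvdeg⟩ := hv
      have hsplit : cliquesIn G r s ⊆
          (cliquesIn G r (s.erase v)) ∪ ((cliquesIn G r s).filter (fun A => v ∈ A)) := by
        intro A hA
        rw [Finset.mem_union]
        by_cases hvA : v ∈ A
        · exact Or.inr (Finset.mem_filter.2 ⟨hA, hvA⟩)
        · left
          rw [cliquesIn, Finset.mem_filter, Finset.mem_powersetCard] at hA ⊢
          exact ⟨⟨fun u hu => Finset.mem_erase.2 ⟨fun h => hvA (h ▸ hu), hA.1.1 hu⟩, hA.1.2⟩, hA.2⟩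
      -- cliques containing v inject into (r-1)-subsets of the neighborhood of v in s
      have hcontain : ((cliquesIn G r s).filter (fun A => v ∈ A)).card ≤ k.choose (r - 1) := by
        have hinj : ((cliquesIn G r s).filter (fun A => v ∈ A)).card ≤
            ((s.filter (G.Adj v)).powersetCard (r - 1)).card := by
          apply Finset.card_le_card_of_injOn (fun A => A.erase v)
          · intro A hA
            rw [Finset.mem_coe, Finset.mem_filter] at hA
            obtain ⟨hA1, hA2⟩ := hA
            rw [cliquesIn, Finset.mem_filter, Finset.mem_powersetCard] at hA1
            rw [Finset.mem_coe, Finset.mem_powersetCard]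
            constructor
            · intro u hu
              rw [Finset.mem_erase] at hu
              exact Finset.mem_filter.2 ⟨hA1.1.1 hu.2, hA1.2 v hA2 u hu.2 (Ne.symm hu.1)⟩
            · rw [Finset.card_erase_of_mem hA2, hA1.1.2]
          · intro A hA B hB hAB
            rw [Finset.mem_coe, Finset.mem_filter] at hA hB
            have hAB' : A.erase v = B.erase v := hAB
            have : insert v (A.erase v) = insert v (B.erase v) := by rw [hAB']
            rwa [Finset.insert_erase hA.2, Finset.insert_erase hB.2] at this
        calc ((cliquesIn G r s).filter (fun A => v ∈ A)).card
            ≤ ((s.filter (G.Adj v)).powersetCard (r - 1)).card := hinj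
          _ = (s.filter (G.Adj v)).card.choose (r - 1) := by rw [Finset.card_powersetCard]
          _ ≤ k.choose (r - 1) := Nat.choose_le_choose _ (by omega)
      have herase := ih (s.erase v) (Finset.erase_ssubset hvs)
      have hcard : (s.erase v).card = s.card - 1 := Finset.card_erase_of_mem hvs
      have hs1 : 1 ≤ s.card := Finset.card_pos.2 hs
      calc (cliquesIn G r s).card
          ≤ ((cliquesIn G r (s.erase v)) ∪ ((cliquesIn G r s).filter (fun A => v ∈ A))).card :=
            Finset.card_le_card hsplit
        _ ≤ (cliquesIn G r (s.erase v)).card + ((cliquesIn G r s).filter (fun A => v ∈ A)).card :=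
            Finset.card_union_le _ _
        _ ≤ k.choose (r - 1) * (s.card - 1) + k.choose (r - 1) := by
            rw [hcard] at herase; omega
        _ = k.choose (r - 1) * s.card := by
            rw [← Nat.mul_succ]
            congr 1
            omega


/-- A partial matching between hyperedges of `H` and pairs contained in them. -/
def IsMatching {n : ℕ} (H : Finset (Finset (Fin n)))
    (M : Finset (Finset (Fin n) × Finset (Fin n))) : Prop :=
  (∀ m ∈ M, m.1 ∈ H ∧ m.2 ⊆ m.1 ∧ m.2.card = 2) ∧
  (∀ m ∈ M, ∀ m' ∈ M, m ≠ m' → m.1 ≠ m'.1 ∧ m.2 ≠ m'.2)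

lemma exists_good_matching {n : ℕ} (H : Finset (Finset (Fin n))) :
    ∃ M, IsMatching H M ∧ ∀ A ∈ H, ∀ p ⊆ A, p.card = 2 →
      (∀ m ∈ M, m.1 ≠ A) → ∃ m ∈ M, m.2 = p := by
  classical
  have hne : ((Finset.univ : Finset (Finset (Fin n) × Finset (Fin n))).powerset.filter
      (fun M => IsMatching H M)).Nonempty := by
    refine ⟨∅, ?_⟩
    simp [IsMatching]
  obtain ⟨M, hM, hmax⟩ := Finset.exists_maximal hne
  rw [Finset.mem_filter] at hM
  refine ⟨M, hM.2, ?_⟩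
  intro A hA p hpA hp2 hAun
  by_contra hco
  push_neg at hco
  have hnotmem : (A, p) ∉ M := fun h => hAun _ h rfl
  have : IsMatching H (insert (A, p) M) := by
    constructor
    · intro m hm
      rcases Finset.mem_insert.1 hm with rfl | hm
      · exact ⟨hA, hpA, hp2⟩
      · exact hM.2.1 m hm
    · intro m hm m' hm' hne'
      rcases Finset.mem_insert.1 hm with rfl | hm <;>
        rcases Finset.mem_insert.1 hm' with rfl | hm'
      · exact absurd rfl hne'
      · exact ⟨fun h => hAun m' hm' h.symm, fun h => hco m' hm' h.symm⟩
      · exact ⟨fun h => hAun m hm h, fun h => hco m hm h⟩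
      · exact hM.2.2 m hm m' hm' hne'
  have hlt : M < insert (A, p) M := Finset.ssubset_insert hnotmem
  exact lt_irrefl _ (lt_of_lt_of_le hlt (hmax (Finset.mem_filter.2 ⟨Finset.mem_powerset.2 (Finset.subset_univ _), this⟩) hlt.le))

/-- If `m ∈ M` matches the pair `{u,v}`, the hyperedges matched to pairs containing
`u` and `v` are exactly `{m.1}`. -/
lemma matching_filter_eq {n : ℕ} {H : Finset (Finset (Fin n))}
    {M : Finset (Finset (Fin n) × Finset (Fin n))} (hM : IsMatching H M)
    {u v : Fin n} (huv : u ≠ v) {m : Finset (Fin n) × Finset (Fin n)}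
    (hm : m ∈ M) (hm2 : m.2 = {u, v}) :
    M.filter (fun m' => u ∈ m'.2 ∧ v ∈ m'.2) = {m} := by
  ext m'
  rw [Finset.mem_filter, Finset.mem_singleton]
  constructor
  · rintro ⟨hm', hu, hv⟩
    by_contra hne'
    have h2 : m'.2 = {u, v} := by
      refine (Finset.eq_of_subset_of_card_le ?_ ?_).symm
      · intro z hz
        rcases Finset.mem_insert.1 hz with rfl | hz
        · exact hu
        · rw [Finset.mem_singleton] at hz; subst hz; exact hv
      · rw [(hM.1 m' hm').2.2, Finset.card_pair huv]
    exact (hM.2 m' hm' m hm hne').2 (h2.trans hm2.symm)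
  · rintro rfl
    refine ⟨hm, ?_, ?_⟩
    · rw [hm2]; exact Finset.mem_insert_self _ _
    · rw [hm2]; exact Finset.mem_insert_of_mem (Finset.mem_singleton_self _)

lemma sym2_exists_eq {α : Type*} (e : Sym2 α) : ∃ x y, e = s(x, y) := by
  induction e using Sym2.ind with
  | _ x y => exact ⟨x, y, rfl⟩

lemma forall_mem_sym2_iff {α : Type*} {x y : α} {p : α → Prop} :
    (∀ z ∈ s(x, y), p z) ↔ p x ∧ p y := by
  constructor
  · intro h
    exact ⟨h x (Sym2.mem_mk_left _ _), h y (Sym2.mem_mk_right _ _)⟩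
  · rintro ⟨h1, h2⟩ z hz
    rcases Sym2.mem_iff.1 hz with rfl | rfl
    · exact h1
    · exact h2

lemma extend_berge {n k t : ℕ} {H : Finset (Finset (Fin n))}
    {M : Finset (Finset (Fin n) × Finset (Fin n))} (hM : IsMatching H M)
    (i : Fin k ↪ Fin n) (h : Sym2 (Fin k) → Finset (Finset (Fin n)))
    (hsub : ∀ e ∈ (SimpleGraph.pathGraph k).edgeSet,
      h e ⊆ H \ M.image Prod.fst ∧ (h e).card = t ∧ ∀ A ∈ h e, ∀ x ∈ e, i x ∈ A)
    (hdisj : ∀ e ∈ (SimpleGraph.pathGraph k).edgeSet, ∀ e' ∈ (SimpleGraph.pathGraph k).edgeSet,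
      e ≠ e' → Disjoint (h e) (h e'))
    (hmatched : ∀ x y : Fin k, (SimpleGraph.pathGraph k).Adj x y →
      ∃ m ∈ M, m.2 = ({i x, i y} : Finset (Fin n))) :
    HasBergeCopy H (SimpleGraph.pathGraph k) (t + 1) := by
  classical
  refine ⟨i, fun e => h e ∪ (M.filter (fun m => ∀ z ∈ e, i z ∈ m.2)).image Prod.fst, ?_, ?_⟩
  · intro e he
    obtain ⟨x, y, rfl⟩ := sym2_exists_eq e
    have hadj : (SimpleGraph.pathGraph k).Adj x y := (SimpleGraph.mem_edgeSet _).1 he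
    obtain ⟨m, hm, hm2⟩ := hmatched x y hadj
    have hfilter : M.filter (fun m' => ∀ z ∈ s(x, y), i z ∈ m'.2) = {m} := by
      refine (Finset.filter_congr fun m' _ => ?_).trans
        (matching_filter_eq hM (fun hxy => hadj.ne (i.injective hxy)) hm hm2)
      exact forall_mem_sym2_iff
    dsimp only
    rw [hfilter]
    obtain ⟨hs, hc, hx⟩ := hsub _ he
    have hdisj1 : m.1 ∉ h s(x, y) := by
      intro hmem
      have := hs hmem
      rw [Finset.mem_sdiff] at this
      exact this.2 (Finset.mem_image.2 ⟨m, hm, rfl⟩)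
    refine ⟨?_, ?_, ?_⟩
    · intro A hA
      rcases Finset.mem_union.1 hA with hA | hA
      · exact (Finset.mem_sdiff.1 (hs hA)).1
      · rw [Finset.image_singleton, Finset.mem_singleton] at hA
        subst hA
        exact (hM.1 m hm).1
    · rw [Finset.image_singleton,
        Finset.card_union_of_disjoint (Finset.disjoint_singleton_right.2 hdisj1), hc]
      simp
    · intro A hA z hz
      rcases Finset.mem_union.1 hA with hA | hA
      · exact hx A hA z hz
      · rw [Finset.image_singleton, Finset.mem_singleton] at hA
        subst hA
        apply (hM.1 m hm).2.1
        rw [hm2]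
        rcases Sym2.mem_iff.1 hz with rfl | rfl
        · exact Finset.mem_insert_self _ _
        · exact Finset.mem_insert_of_mem (Finset.mem_singleton_self _)
  · intro e he e' he' hne
    obtain ⟨x, y, rfl⟩ := sym2_exists_eq e
    obtain ⟨x', y', rfl⟩ := sym2_exists_eq e'
    have hadj : (SimpleGraph.pathGraph k).Adj x y := (SimpleGraph.mem_edgeSet _).1 he
    have hadj' : (SimpleGraph.pathGraph k).Adj x' y' := (SimpleGraph.mem_edgeSet _).1 he'
    obtain ⟨m, hm, hm2⟩ := hmatched x y hadj
    obtain ⟨m', hm', hm2'⟩ := hmatched x' y' hadj'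
    have hfilter : M.filter (fun m'' => ∀ z ∈ s(x, y), i z ∈ m''.2) = {m} := by
      refine (Finset.filter_congr fun m'' _ => ?_).trans
        (matching_filter_eq hM (fun hxy => hadj.ne (i.injective hxy)) hm hm2)
      exact forall_mem_sym2_iff
    have hfilter' : M.filter (fun m'' => ∀ z ∈ s(x', y'), i z ∈ m''.2) = {m'} := by
      refine (Finset.filter_congr fun m'' _ => ?_).trans
        (matching_filter_eq hM (fun hxy => hadj'.ne (i.injective hxy)) hm' hm2')
      exact forall_mem_sym2_iff
    dsimp only
    rw [hfilter, hfilter', Finset.image_singleton, Finset.image_singleton]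
    have hsub1 := (hsub _ he).1
    have hsub2 := (hsub _ he').1
    rw [Finset.disjoint_union_left]
    constructor
    · rw [Finset.disjoint_union_right]
      refine ⟨hdisj _ he _ he' hne, ?_⟩
      rw [Finset.disjoint_singleton_right]
      intro hmem
      exact (Finset.mem_sdiff.1 (hsub1 hmem)).2 (Finset.mem_image.2 ⟨m', hm', rfl⟩)
    · rw [Finset.disjoint_union_right]
      constructor
      · rw [Finset.disjoint_singleton_left]
        intro hmem
        exact (Finset.mem_sdiff.1 (hsub2 hmem)).2 (Finset.mem_image.2 ⟨m, hm, rfl⟩)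
      · rw [Finset.disjoint_singleton_left, Finset.mem_singleton]
        intro heq
        -- m.1 = m'.1 forces m = m', hence the pairs agree, hence e = e'
        have hmm : m = m' := by
          by_contra hmm
          exact (hM.2 m hm m' hm' hmm).1 heq
        subst hmm
        have hpair : ({i x, i y} : Finset (Fin n)) = {i x', i y'} := by rw [← hm2, hm2']
        have hix : i x = i x' ∨ i x = i y' := by
          have : i x ∈ ({i x', i y'} : Finset (Fin n)) := by
            rw [← hpair]; exact Finset.mem_insert_self _ _
          simpa using this
        have hiy : i y = i x' ∨ i y = i y' := by
          have : i y ∈ ({i x', i y'} : Finset (Fin n)) := by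
            rw [← hpair]; exact Finset.mem_insert_of_mem (Finset.mem_singleton_self _)
          simpa using this
        apply hne
        rw [Sym2.eq_iff]
        have hxy : x ≠ y := hadj.ne
        rcases hix with h1 | h1 <;> rcases hiy with h2 | h2
        · exact absurd (i.injective (h1.trans h2.symm)) hxy
        · exact Or.inl ⟨i.injective h1, i.injective h2⟩
        · exact Or.inr ⟨i.injective h1, i.injective h2⟩
        · exact absurd (i.injective (h1.trans h2.symm)) hxy

lemma berge_upper {n r k : ℕ} (hr : 3 ≤ r) (hk : 2 ≤ k) :
    ∀ t, 1 ≤ t → ∀ H : Finset (Finset (Fin n)), (∀ A ∈ H, A.card = r) →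
    ¬ HasBergeCopy H (SimpleGraph.pathGraph k) t →
    H.card ≤ (t - 1) * n.choose 2 + (k.choose 1 + k.choose (r - 1)) * n := by
  intro t
  induction t with
  | zero => omega
  | succ t' ih =>
    intro _ H hunif hfree
    classical
    obtain ⟨M, hM, hgood⟩ := exists_good_matching H
    set H₀ := M.image Prod.fst with hH₀
    have hH₀sub : H₀ ⊆ H := by
      intro A hA
      obtain ⟨m, hm, rfl⟩ := Finset.mem_image.1 hA
      exact (hM.1 m hm).1
    have hfstinj : Set.InjOn Prod.fst (M : Set (Finset (Fin n) × Finset (Fin n))) := by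
      intro m hm m' hm' hmm
      by_contra hne
      exact (hM.2 m hm m' hm' hne).1 hmm
    have hsndinj : Set.InjOn Prod.snd (M : Set (Finset (Fin n) × Finset (Fin n))) := by
      intro m hm m' hm' hmm
      by_contra hne
      exact (hM.2 m hm m' hm' hne).2 hmm
    have hcard_fst : H₀.card = M.card := Finset.card_image_of_injOn hfstinj
    have hcard_snd : (M.image Prod.snd).card = M.card := Finset.card_image_of_injOn hsndinj
    have hdecomp : (H \ H₀).card + H₀.card = H.card :=
      Finset.card_sdiff_add_card_eq_card hH₀sub
    have hunivcard : (Finset.univ : Finset (Fin n)).card = n := by simp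
    rcases Nat.eq_zero_or_pos t' with rfl | ht'pos
    · -- base case : no Berge copy with one hyperedge per edge
      set E := M.image Prod.snd with hE
      set G := pairGraph E with hG
      have hGfree : ¬ GraphContains (SimpleGraph.pathGraph k) G := by
        rintro ⟨f, hf⟩
        apply hfree
        refine extend_berge (t := 0) hM f (fun _ => ∅) ?_ ?_ ?_
        · intro e _
          refine ⟨by simp, by simp, by simp⟩
        · intro e _ e' _ _
          simp
        · intro x y hxy
          have := hf x y hxy
          rw [hG] at this
          obtain ⟨hne', hmem⟩ := this
          rw [hE] at hmem
          obtain ⟨m, hm, hm2⟩ := Finset.mem_image.1 hmem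
          exact ⟨m, hm, hm2⟩
      have hEsub : E ⊆ cliquesIn G 2 Finset.univ := by
        intro p hp
        obtain ⟨m, hm, rfl⟩ := Finset.mem_image.1 hp
        rw [cliquesIn, Finset.mem_filter, Finset.mem_powersetCard]
        refine ⟨⟨Finset.subset_univ _, (hM.1 m hm).2.2⟩, ?_⟩
        intro u hu v hv huv
        have hpair : ({u, v} : Finset (Fin n)) = m.2 := by
          apply Finset.eq_of_subset_of_card_le
          · intro z hz
            rcases Finset.mem_insert.1 hz with rfl | hz
            · exact hu
            · rw [Finset.mem_singleton] at hz; subst hz; exact hv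
          · rw [(hM.1 m hm).2.2, Finset.card_pair huv]
        exact ⟨huv, by rw [hpair]; exact Finset.mem_image.2 ⟨m, hm, rfl⟩⟩
      have hEcard : E.card ≤ k.choose 1 * n := by
        calc E.card ≤ (cliquesIn G 2 Finset.univ).card := Finset.card_le_card hEsub
          _ ≤ k.choose 1 * n := by
              have := cliquesIn_card_le G (by omega) hGfree 2 (by omega) Finset.univ
              rwa [hunivcard] at this
      have hunm : H \ H₀ ⊆ cliquesIn G r Finset.univ := by
        intro A hA
        rw [Finset.mem_sdiff] at hA
        rw [cliquesIn, Finset.mem_filter, Finset.mem_powersetCard]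
        refine ⟨⟨Finset.subset_univ _, hunif A hA.1⟩, ?_⟩
        intro u hu v hv huv
        have hunA : ∀ m ∈ M, m.1 ≠ A := by
          intro m hm hmA
          exact hA.2 (Finset.mem_image.2 ⟨m, hm, hmA⟩)
        have hpsub : ({u, v} : Finset (Fin n)) ⊆ A := by
          intro z hz
          rcases Finset.mem_insert.1 hz with rfl | hz
          · exact hu
          · rw [Finset.mem_singleton] at hz; subst hz; exact hv
        obtain ⟨m, hm, hm2⟩ := hgood A hA.1 {u, v} hpsub (Finset.card_pair huv) hunA
        exact ⟨huv, by rw [← hm2]; exact Finset.mem_image.2 ⟨m, hm, rfl⟩⟩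
      have hunmcard : (H \ H₀).card ≤ k.choose (r - 1) * n := by
        calc (H \ H₀).card ≤ (cliquesIn G r Finset.univ).card := Finset.card_le_card hunm
          _ ≤ k.choose (r - 1) * n := by
              have := cliquesIn_card_le G (by omega) hGfree r (by omega) Finset.univ
              rwa [hunivcard] at this
      have hH₀card : H₀.card ≤ k.choose 1 * n := by
        rw [hcard_fst, ← hcard_snd]
        exact hEcard
      have := hdecomp
      rw [Nat.zero_add, Nat.sub_self, Nat.zero_mul, Nat.zero_add, Nat.add_mul]
      omega
    · -- inductive step
      have hfree' : ¬ HasBergeCopy (H \ H₀) (SimpleGraph.pathGraph k) t' := by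
        rintro ⟨i, h, h1, h2⟩
        apply hfree
        have : t' + 1 = t' + 1 := rfl
        refine extend_berge (t := t') hM i h ?_ h2 ?_
        · intro e he
          exact h1 e he
        · intro x y hxy
          have he : s(x, y) ∈ (SimpleGraph.pathGraph k).edgeSet :=
            (SimpleGraph.mem_edgeSet _).2 hxy
          obtain ⟨hs, hc, hx⟩ := h1 _ he
          have hne0 : (h s(x, y)).Nonempty := by
            rw [← Finset.card_pos, hc]; omega
          obtain ⟨A₀, hA₀⟩ := hne0
          have hA₀' := hs hA₀
          rw [Finset.mem_sdiff] at hA₀'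
          have hunA : ∀ m ∈ M, m.1 ≠ A₀ := by
            intro m hm hmA
            exact hA₀'.2 (Finset.mem_image.2 ⟨m, hm, hmA⟩)
          have hpsub : ({i x, i y} : Finset (Fin n)) ⊆ A₀ := by
            intro z hz
            rcases Finset.mem_insert.1 hz with rfl | hz
            · exact hx A₀ hA₀ x (Sym2.mem_mk_left _ _)
            · rw [Finset.mem_singleton] at hz; subst hz
              exact hx A₀ hA₀ y (Sym2.mem_mk_right _ _)
          have hp2 : ({i x, i y} : Finset (Fin n)).card = 2 :=
            Finset.card_pair (fun hxy' => hxy.ne (i.injective hxy'))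
          exact hgood A₀ hA₀'.1 _ hpsub hp2 hunA
      have hih := ih ht'pos (H \ H₀) (fun A hA => hunif A (Finset.mem_sdiff.1 hA).1) hfree'
      have hH₀card : H₀.card ≤ n.choose 2 := by
        rw [hcard_fst, ← hcard_snd]
        calc (M.image Prod.snd).card ≤ (Finset.univ.powersetCard 2 :
            Finset (Finset (Fin n))).card := by
              apply Finset.card_le_card
              intro p hp
              obtain ⟨m, hm, rfl⟩ := Finset.mem_image.1 hp
              rw [Finset.mem_powersetCard]
              exact ⟨Finset.subset_univ _, (hM.1 m hm).2.2⟩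
          _ = n.choose 2 := by rw [Finset.card_powersetCard, hunivcard]
      have hmul : (t' - 1) * n.choose 2 + n.choose 2 = t' * n.choose 2 := by
        rw [← Nat.succ_mul]
        congr 1
        omega
      have : t' + 1 - 1 = t' := by omega
      rw [this]
      omega


lemma card_filter_val_range {n : ℕ} (a b : ℕ) (hb : b ≤ n) :
    ((Finset.univ : Finset (Fin n)).filter (fun v => a ≤ v.val ∧ v.val < b)).card = b - a := by
  rw [← Nat.card_Ico a b]
  refine Finset.card_bij' (fun (v : Fin n) _ => (v : ℕ))
    (fun m hm => (⟨m, lt_of_lt_of_le (Finset.mem_Ico.1 hm).2 hb⟩ : Fin n)) ?_ ?_ ?_ ?_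
  · intro v hv
    rw [Finset.mem_filter] at hv
    exact Finset.mem_Ico.2 hv.2
  · intro m hm
    rw [Finset.mem_filter]
    exact ⟨Finset.mem_univ _, (Finset.mem_Ico.1 hm).1, (Finset.mem_Ico.1 hm).2⟩
  · intro v hv
    rfl
  · intro m hm
    rfl

lemma heavy_lower {n r k t : ℕ} (hr : 3 ≤ r) (ht : 2 ≤ t)
    (hk : 2 * ((t - 1) * (r - 2)) + 2 ≤ k) (hn : (t - 1) * (r - 2) ≤ n) :
    ∃ H : Finset (Finset (Fin n)), (∀ A ∈ H, A.card = r) ∧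
      ¬ HasHeavyCopy H (SimpleGraph.pathGraph k) t ∧
      H.card = (t - 1) * (n - (t - 1) * (r - 2)).choose 2 := by
  classical
  set d := r - 2 with hd
  set s0 := (t - 1) * d with hs0
  set B : ℕ → Finset (Fin n) :=
    fun j => Finset.univ.filter (fun v => j * d ≤ v.val ∧ v.val < (j + 1) * d) with hB
  set O : Finset (Fin n) := Finset.univ.filter (fun v => s0 ≤ v.val ∧ v.val < n) with hO
  have hd1 : 1 ≤ d := by omega
  have hBcard : ∀ j < t - 1, (B j).card = d := by
    intro j hj
    rw [hB]
    have hble : (j + 1) * d ≤ n := by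
      calc (j + 1) * d ≤ (t - 1) * d := Nat.mul_le_mul_right d (by omega)
        _ ≤ n := hn
    rw [card_filter_val_range _ _ hble]
    have : (j + 1) * d = j * d + d := by ring
    omega
  have hBlt : ∀ j < t - 1, ∀ v ∈ B j, v.val < s0 := by
    intro j hj v hv
    rw [hB, Finset.mem_filter] at hv
    calc v.val < (j + 1) * d := hv.2.2
      _ ≤ (t - 1) * d := Nat.mul_le_mul_right d (by omega)
  set H : Finset (Finset (Fin n)) :=
    ((Finset.range (t - 1)) ×ˢ (O.powersetCard 2)).image (fun jp : ℕ × Finset (Fin n) => B jp.1 ∪ jp.2) with hH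
  have hOge : ∀ p ∈ O.powersetCard 2, ∀ v ∈ p, s0 ≤ v.val := by
    intro p hp v hv
    have := (Finset.mem_powersetCard.1 hp).1 hv
    rw [hO, Finset.mem_filter] at this
    exact this.2.1
  have hdisjBO : ∀ j < t - 1, ∀ p ∈ O.powersetCard 2, Disjoint (B j) p := by
    intro j hj p hp
    rw [Finset.disjoint_left]
    intro v hvB hvp
    exact absurd (hOge p hp v hvp) (by have := hBlt j hj v hvB; omega)
  -- the two parts can be recovered from the union
  have hsplit : ∀ j < t - 1, ∀ p ∈ O.powersetCard 2,
      ((B j ∪ p).filter (fun v => s0 ≤ v.val) = p ∧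
       (B j ∪ p).filter (fun v => v.val < s0) = B j) := by
    intro j hj p hp
    constructor
    · ext v
      rw [Finset.mem_filter, Finset.mem_union]
      constructor
      · rintro ⟨hv | hv, hv2⟩
        · exact absurd hv2 (by have := hBlt j hj v hv; omega)
        · exact hv
      · intro hv
        exact ⟨Or.inr hv, hOge p hp v hv⟩
    · ext v
      rw [Finset.mem_filter, Finset.mem_union]
      constructor
      · rintro ⟨hv | hv, hv2⟩
        · exact hv
        · exact absurd hv2 (by have := hOge p hp v hv; omega)
      · intro hv
        exact ⟨Or.inl hv, hBlt j hj v hv⟩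
  have hinj : Set.InjOn (fun jp : ℕ × Finset (Fin n) => B jp.1 ∪ jp.2)
      ((Finset.range (t - 1)) ×ˢ (O.powersetCard 2) :
        Finset (ℕ × Finset (Fin n))) := by
    rintro ⟨j, p⟩ hjp ⟨j', p'⟩ hjp' hU
    rw [Finset.mem_coe, Finset.mem_product, Finset.mem_range] at hjp hjp'
    simp only at hU
    have hp := hsplit j hjp.1 p hjp.2
    have hp' := hsplit j' hjp'.1 p' hjp'.2
    have hpp : p = p' := by rw [← hp.1, ← hp'.1, hU]
    have hBB : B j = B j' := by rw [← hp.2, ← hp'.2, hU]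
    have hjj : j = j' := by
      have hne : (B j).Nonempty := by
        rw [← Finset.card_pos, hBcard j hjp.1]; omega
      obtain ⟨v, hv⟩ := hne
      have hv' : v ∈ B j' := hBB ▸ hv
      rw [hB, Finset.mem_filter] at hv hv'
      by_contra hne'
      rcases Nat.lt_or_ge j j' with hlt | hge
      · have h1 : (j + 1) * d ≤ j' * d := Nat.mul_le_mul_right d (by omega)
        exact Nat.lt_irrefl v.val
          (lt_of_lt_of_le (lt_of_lt_of_le hv.2.2 h1) hv'.2.1)
      · have h1 : (j' + 1) * d ≤ j * d := Nat.mul_le_mul_right d (by omega)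
        exact Nat.lt_irrefl v.val
          (lt_of_lt_of_le (lt_of_lt_of_le hv'.2.2 h1) hv.2.1)
    rw [hjj, hpp]
  refine ⟨H, ?_, ?_, ?_⟩
  · -- uniformity
    intro A hA
    rw [hH] at hA
    obtain ⟨⟨j, p⟩, hjp, rfl⟩ := Finset.mem_image.1 hA
    rw [Finset.mem_product, Finset.mem_range] at hjp
    simp only
    rw [Finset.card_union_of_disjoint (hdisjBO j hjp.1 p hjp.2), hBcard j hjp.1,
      (Finset.mem_powersetCard.1 hjp.2).2]
    omega
  · -- no heavy copy
    rintro ⟨i, hi⟩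
    -- pairs with both ends high have at most t-1 hyperedges
    have hhigh : ∀ u v : Fin n, u ≠ v → s0 ≤ u.val → s0 ≤ v.val →
        (H.filter (fun A => u ∈ A ∧ v ∈ A)).card ≤ t - 1 := by
      intro u v huv hu hv
      have hsub : H.filter (fun A => u ∈ A ∧ v ∈ A) ⊆
          (Finset.range (t - 1)).image (fun j => B j ∪ {u, v}) := by
        intro A hA
        rw [Finset.mem_filter] at hA
        obtain ⟨hA1, hAu, hAv⟩ := hA
        rw [hH] at hA1
        obtain ⟨⟨j, p⟩, hjp, rfl⟩ := Finset.mem_image.1 hA1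
        rw [Finset.mem_product, Finset.mem_range] at hjp
        simp only at hAu hAv ⊢
        have hup : u ∈ p := by
          rcases Finset.mem_union.1 hAu with h | h
          · exact absurd hu (by have := hBlt j hjp.1 u h; omega)
          · exact h
        have hvp : v ∈ p := by
          rcases Finset.mem_union.1 hAv with h | h
          · exact absurd hv (by have := hBlt j hjp.1 v h; omega)
          · exact h
        have hpeq : p = {u, v} := by
          refine (Finset.eq_of_subset_of_card_le ?_ ?_).symm
          · intro z hz
            rcases Finset.mem_insert.1 hz with rfl | hz
            · exact hup
            · rw [Finset.mem_singleton] at hz; subst hz; exact hvp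
          · rw [(Finset.mem_powersetCard.1 hjp.2).2, Finset.card_pair huv]
        rw [hpeq]
        exact Finset.mem_image.2 ⟨j, Finset.mem_range.2 hjp.1, rfl⟩
      calc (H.filter (fun A => u ∈ A ∧ v ∈ A)).card
          ≤ ((Finset.range (t - 1)).image (fun j => B j ∪ {u, v})).card :=
            Finset.card_le_card hsub
        _ ≤ (Finset.range (t - 1)).card := Finset.card_image_le
        _ = t - 1 := Finset.card_range _
    -- build an injection from Fin (s0 + 1) into the low vertices
    have hklarge : ∀ a : ℕ, a ≤ s0 → 2 * a + 1 < k := by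
      intro a ha
      omega
    have hlow : ∀ a : Fin (s0 + 1), ∃ w : Fin k,
        (w.val = 2 * a.val ∨ w.val = 2 * a.val + 1) ∧ (i w).val < s0 := by
      intro a
      have h2a : 2 * a.val + 1 < k := hklarge a.val (by omega)
      set x : Fin k := ⟨2 * a.val, by omega⟩
      set y : Fin k := ⟨2 * a.val + 1, by omega⟩
      have hadj : (SimpleGraph.pathGraph k).Adj x y := by
        rw [SimpleGraph.pathGraph_adj]
        left
        rfl
      have hheavy := hi x y hadj
      by_contra hco
      push_neg at hco
      have hx : s0 ≤ (i x).val := by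
        have := hco x (Or.inl rfl)
        omega
      have hy : s0 ≤ (i y).val := by
        have := hco y (Or.inr rfl)
        omega
      have hxy : i x ≠ i y := by
        intro h
        have := i.injective h
        rw [Fin.ext_iff] at this
        simp only [x, y] at this
        omega
      have := hhigh (i x) (i y) hxy hx hy
      omega
    choose w hw1 hw2 using hlow
    have hwinj : Function.Injective (fun a => i (w a)) := by
      intro a b hab
      have := i.injective hab
      have h1 := hw1 a
      have h2 := hw1 b
      rw [Fin.ext_iff]
      rw [this] at h1
      rcases h1 with h1 | h1 <;> rcases h2 with h2 | h2 <;> omega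
    have hsubS : (Finset.univ : Finset (Fin (s0 + 1))).image (fun a => i (w a)) ⊆
        Finset.univ.filter (fun v : Fin n => 0 ≤ v.val ∧ v.val < s0) := by
      intro v hv
      obtain ⟨a, _, rfl⟩ := Finset.mem_image.1 hv
      rw [Finset.mem_filter]
      exact ⟨Finset.mem_univ _, Nat.zero_le _, hw2 a⟩
    have hcard1 : ((Finset.univ : Finset (Fin (s0 + 1))).image (fun a => i (w a))).card
        = s0 + 1 := by
      rw [Finset.card_image_of_injective _ hwinj, Finset.card_univ, Fintype.card_fin]
    have hcard2 := Finset.card_le_card hsubS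
    rw [hcard1, card_filter_val_range 0 s0 (by omega)] at hcard2
    omega
  · -- cardinality
    rw [hH, Finset.card_image_of_injOn hinj, Finset.card_product, Finset.card_range,
      Finset.card_powersetCard]
    congr 2
    rw [hO, card_filter_val_range s0 n le_rfl]


lemma choose_two_sub_le (s n : ℕ) : n.choose 2 ≤ (n - s).choose 2 + s * n := by
  induction s with
  | zero => simp
  | succ s ih =>
    have hstep : (n - s).choose 2 ≤ (n - (s + 1)).choose 2 + n := by
      rcases Nat.eq_zero_or_pos (n - s) with h0 | hpos
      · have : n - (s + 1) = 0 := by omega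
        rw [h0, this]
        omega
      · obtain ⟨m, hm⟩ := Nat.exists_eq_add_of_lt hpos
        rw [Nat.zero_add] at hm
        have hm' : n - s = m + 1 := hm
        have h1 : n - (s + 1) = m := by omega
        rw [hm', h1, Nat.choose_succ_succ, Nat.choose_one_right,
          show Nat.succ 1 = 2 from rfl]
        have hmn : m ≤ n := by omega
        omega
    calc n.choose 2 ≤ (n - s).choose 2 + s * n := ih
      _ ≤ (n - (s + 1)).choose 2 + n + s * n := by omega
      _ = (n - (s + 1)).choose 2 + (s + 1) * n := by ring

lemma squeeze_choose_two (t1 s0 D n₀ : ℕ) (f : ℕ → ℕ)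
    (h : ∀ n, n₀ ≤ n → t1 * (n - s0).choose 2 ≤ f n ∧ f n ≤ t1 * n.choose 2 + D * n) :
    Tendsto (fun n : ℕ => (f n : ℝ) / (n.choose 2)) atTop (nhds (t1 : ℝ)) := by
  set g : ℕ → ℝ := fun n => (n : ℝ) / (n.choose 2) with hgdef
  have hg : Tendsto g atTop (nhds 0) := by
    have h2 : Tendsto (fun n : ℕ => 2 / ((n : ℝ) - 1)) atTop (nhds 0) := by
      apply Tendsto.div_atTop (tendsto_const_nhds)
      have := tendsto_atTop_add_const_right atTop (-1 : ℝ) tendsto_natCast_atTop_atTop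
      apply this.congr
      intro n
      ring
    apply h2.congr'
    filter_upwards [eventually_ge_atTop 2] with n hn
    have hn0 : (0 : ℝ) < (n : ℝ) := by positivity
    have hn1 : (0 : ℝ) < (n : ℝ) - 1 := by
      have : (2 : ℝ) ≤ (n : ℝ) := by exact_mod_cast hn
      linarith
    rw [hgdef]
    simp only
    rw [Nat.cast_choose_two]
    field_simp
  have hlo : Tendsto (fun n => (t1 : ℝ) - (t1 * s0 : ℕ) * g n) atTop (nhds (t1 : ℝ)) := by
    have hc : Tendsto (fun _ : ℕ => (t1 : ℝ)) atTop (nhds (t1 : ℝ)) := tendsto_const_nhds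
    have h2 := hc.sub ((hg.const_mul ((t1 * s0 : ℕ) : ℝ)))
    simpa using h2
  have hhi : Tendsto (fun n => (t1 : ℝ) + (D : ℕ) * g n) atTop (nhds (t1 : ℝ)) := by
    have hc : Tendsto (fun _ : ℕ => (t1 : ℝ)) atTop (nhds (t1 : ℝ)) := tendsto_const_nhds
    have h2 := hc.add ((hg.const_mul ((D : ℕ) : ℝ)))
    simpa using h2
  apply tendsto_of_tendsto_of_tendsto_of_le_of_le' hlo hhi
  · filter_upwards [eventually_ge_atTop (max n₀ 2)] with n hn
    have hn₀ : n₀ ≤ n := le_trans (le_max_left _ _) hn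
    have hn2 : 2 ≤ n := le_trans (le_max_right _ _) hn
    have hC : (0 : ℝ) < (n.choose 2 : ℝ) := by
      have := Nat.choose_pos (show 2 ≤ n from hn2)
      exact_mod_cast this
    have hcast : (t1 : ℝ) * (n.choose 2 : ℝ) ≤ (f n : ℝ) + ((t1 * s0 : ℕ) : ℝ) * n := by
      have h1 : t1 * n.choose 2 ≤ t1 * ((n - s0).choose 2 + s0 * n) :=
        Nat.mul_le_mul_left _ (choose_two_sub_le s0 n)
      have h2 : t1 * ((n - s0).choose 2 + s0 * n) = t1 * (n - s0).choose 2 + (t1 * s0) * n := by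
        ring
      have h3 := (h n hn₀).1
      have : t1 * n.choose 2 ≤ f n + (t1 * s0) * n := by omega
      exact_mod_cast this
    rw [hgdef]
    simp only
    rw [le_div_iff₀ hC]
    have hcancel : ((n : ℝ) / (n.choose 2 : ℝ)) * (n.choose 2 : ℝ) = (n : ℝ) :=
      div_mul_cancel₀ _ (ne_of_gt hC)
    calc ((t1 : ℝ) - ((t1 * s0 : ℕ) : ℝ) * ((n : ℝ) / (n.choose 2 : ℝ))) * (n.choose 2 : ℝ)
        = (t1 : ℝ) * (n.choose 2 : ℝ) -
          ((t1 * s0 : ℕ) : ℝ) * (((n : ℝ) / (n.choose 2 : ℝ)) * (n.choose 2 : ℝ)) := by ring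
      _ = (t1 : ℝ) * (n.choose 2 : ℝ) - ((t1 * s0 : ℕ) : ℝ) * (n : ℝ) := by rw [hcancel]
      _ ≤ (f n : ℝ) := by linarith
  · filter_upwards [eventually_ge_atTop (max n₀ 2)] with n hn
    have hn₀ : n₀ ≤ n := le_trans (le_max_left _ _) hn
    have hn2 : 2 ≤ n := le_trans (le_max_right _ _) hn
    have hC : (0 : ℝ) < (n.choose 2 : ℝ) := by
      have := Nat.choose_pos (show 2 ≤ n from hn2)
      exact_mod_cast this
    have hcast : (f n : ℝ) ≤ (t1 : ℝ) * (n.choose 2 : ℝ) + ((D : ℕ) : ℝ) * n := by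
      have := (h n hn₀).2
      exact_mod_cast this
    rw [hgdef]
    simp only
    rw [div_le_iff₀ hC]
    have hcancel : ((n : ℝ) / (n.choose 2 : ℝ)) * (n.choose 2 : ℝ) = (n : ℝ) :=
      div_mul_cancel₀ _ (ne_of_gt hC)
    calc (f n : ℝ) ≤ (t1 : ℝ) * (n.choose 2 : ℝ) + ((D : ℕ) : ℝ) * (n : ℝ) := hcast
      _ = (t1 : ℝ) * (n.choose 2 : ℝ) +
          ((D : ℕ) : ℝ) * (((n : ℝ) / (n.choose 2 : ℝ)) * (n.choose 2 : ℝ)) := by rw [hcancel]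
      _ = ((t1 : ℝ) + ((D : ℕ) : ℝ) * ((n : ℝ) / (n.choose 2 : ℝ))) * (n.choose 2 : ℝ) := by ring

lemma heavy_of_berge {V α : Type*} [DecidableEq V] {H : Finset (Finset V)}
    {F : SimpleGraph α} {t : ℕ} (h : HasBergeCopy H F t) : HasHeavyCopy H F t := by
  classical
  obtain ⟨i, he, h1, _⟩ := h
  refine ⟨i, fun x y hxy => ?_⟩
  obtain ⟨hs, hc, hx⟩ := h1 s(x, y) ((SimpleGraph.mem_edgeSet F).2 hxy)
  rw [← hc]
  apply Finset.card_le_card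
  intro A hA
  rw [Finset.mem_filter]
  exact ⟨hs hA, hx A hA x (Sym2.mem_mk_left _ _), hx A hA y (Sym2.mem_mk_right _ _)⟩

theorem exHeavy_exBerge_path_asymptotics (r t k : ℕ) (hr : 3 ≤ r) (ht : 2 ≤ t)
    (hk : 2 * (t - 1) * (r - 2) + 2 ≤ k) :
    Filter.Tendsto
      (fun n : ℕ => (exHeavy n r t (SimpleGraph.pathGraph k) : ℝ) / (n.choose 2))
      Filter.atTop (nhds ((t : ℝ) - 1)) ∧
    Filter.Tendsto
      (fun n : ℕ => (exBerge n r t (SimpleGraph.pathGraph k) : ℝ) / (n.choose 2))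
      Filter.atTop (nhds ((t : ℝ) - 1)) := by
  classical
  have hs0nn : 0 ≤ (t - 1) * (r - 2) := Nat.zero_le _
  have hk2 : 2 ≤ k := by
    have h0 : 0 ≤ 2 * (t - 1) * (r - 2) := Nat.zero_le _
    omega
  set s0 := (t - 1) * (r - 2) with hs0
  set D := k.choose 1 + k.choose (r - 1) with hD
  -- the per-`n` sandwich
  have hbounds : ∀ n : ℕ, s0 + k + 2 ≤ n →
      ((t - 1) * (n - s0).choose 2 ≤ exHeavy n r t (SimpleGraph.pathGraph k) ∧
        exHeavy n r t (SimpleGraph.pathGraph k) ≤ exBerge n r t (SimpleGraph.pathGraph k) ∧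
        exBerge n r t (SimpleGraph.pathGraph k) ≤ (t - 1) * n.choose 2 + D * n) := by
    intro n hn
    set SH : Set ℕ := {m | ∃ H : Finset (Finset (Fin n)), (∀ A ∈ H, A.card = r) ∧
      ¬ HasHeavyCopy H (SimpleGraph.pathGraph k) t ∧ H.card = m} with hSH
    set SB : Set ℕ := {m | ∃ H : Finset (Finset (Fin n)), (∀ A ∈ H, A.card = r) ∧
      ¬ HasBergeCopy H (SimpleGraph.pathGraph k) t ∧ H.card = m} with hSB
    have hbound : ∀ (m : ℕ) (H : Finset (Finset (Fin n))), H.card = m → m ≤ 2 ^ n := by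
      intro m H hm
      calc m = H.card := hm.symm
        _ ≤ (Finset.univ : Finset (Finset (Fin n))).card := Finset.card_le_univ H
        _ = 2 ^ n := by rw [Finset.card_univ, Fintype.card_finset, Fintype.card_fin]
    have hBddH : BddAbove SH := by
      refine ⟨2 ^ n, ?_⟩
      rintro m ⟨H, -, -, hm⟩
      exact hbound m H hm
    have hBddB : BddAbove SB := by
      refine ⟨2 ^ n, ?_⟩
      rintro m ⟨H, -, -, hm⟩
      exact hbound m H hm
    have hedge : (SimpleGraph.pathGraph k).Adj ⟨0, by omega⟩ ⟨1, by omega⟩ := by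
      rw [SimpleGraph.pathGraph_adj]
      left
      rfl
    have hemptyH : ¬ HasHeavyCopy (∅ : Finset (Finset (Fin n)))
        (SimpleGraph.pathGraph k) t := by
      rintro ⟨i, hi⟩
      have := hi _ _ hedge
      rw [Finset.filter_empty, Finset.card_empty] at this
      omega
    have hemptyB : ¬ HasBergeCopy (∅ : Finset (Finset (Fin n)))
        (SimpleGraph.pathGraph k) t := by
      rintro ⟨i, h, h1, -⟩
      obtain ⟨hs, hc, -⟩ := h1 _ ((SimpleGraph.mem_edgeSet _).2 hedge)
      rw [Finset.subset_empty.1 hs, Finset.card_empty] at hc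
      omega
    have hneH : SH.Nonempty := ⟨0, ∅, by simp, hemptyH, rfl⟩
    have hneB : SB.Nonempty := ⟨0, ∅, by simp, hemptyB, rfl⟩
    have hsubset : SH ⊆ SB := by
      rintro m ⟨H, h1, h2, h3⟩
      exact ⟨H, h1, fun hb => h2 (heavy_of_berge hb), h3⟩
    refine ⟨?_, ?_, ?_⟩
    · -- lower bound
      have hassoc : 2 * ((t - 1) * (r - 2)) + 2 ≤ k := by
        have : 2 * ((t - 1) * (r - 2)) = 2 * (t - 1) * (r - 2) := (mul_assoc _ _ _).symm
        omega
      obtain ⟨H, hu, hnh, hc⟩ := heavy_lower (n := n) hr ht hassoc (by omega)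
      exact le_csSup hBddH ⟨H, hu, hnh, hc⟩
    · exact csSup_le_csSup hBddB hneH hsubset
    · refine csSup_le hneB ?_
      rintro m ⟨H, h1, h2, rfl⟩
      exact berge_upper hr hk2 t (by omega) H h1 h2
  have hcast : ((t - 1 : ℕ) : ℝ) = (t : ℝ) - 1 := by
    rw [Nat.cast_sub (by omega), Nat.cast_one]
  constructor
  · rw [← hcast]
    apply squeeze_choose_two (t - 1) s0 D (s0 + k + 2)
    intro n hn
    obtain ⟨h1, h2, h3⟩ := hbounds n hn
    exact ⟨h1, le_trans h2 h3⟩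
  · rw [← hcast]
    apply squeeze_choose_two (t - 1) s0 D (s0 + k + 2)
    intro n hn
    obtain ⟨h1, h2, h3⟩ := hbounds n hn
    exact ⟨le_trans h1 h2, h3⟩
end

section
/- If a 3-uniform hypergraph H contains no 2-wise Berge copy of the star S_r (the star with r edges), then the graph of 2-heavy edges of H (pairs of vertices contained in at least 2 hyperedges) has maximum degree less than 3r. -/
open Finset

/-- The star with `r` edges: vertex `0` joined to `r` leaves. -/
def starGraph (r : ℕ) : SimpleGraph (Fin (r + 1)) :=
  SimpleGraph.fromRel (fun x _ => x = 0)

lemma star_aux {V : Type*} [DecidableEq V] (v : V) (H : Finset (Finset V))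
    (hunif : ∀ A ∈ H, A.card = 3) :
    ∀ k (S : Finset V), v ∉ S →
      (∀ u ∈ S, 2 ≤ (H.filter (fun A => u ∈ A ∧ v ∈ A)).card) →
      3 * k ≤ S.card + 2 →
      ∃ ys ⊆ S, ∃ g : V → Finset (Finset V), ys.card = k ∧
        (∀ y ∈ ys, g y ⊆ H.filter (fun A => y ∈ A ∧ v ∈ A) ∧ (g y).card = 2) ∧
        (∀ y ∈ ys, ∀ y' ∈ ys, y ≠ y' → Disjoint (g y) (g y')) := by
  intro k
  induction k with
  | zero =>
    intro S _ _ _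
    exact ⟨∅, empty_subset _, fun _ => ∅, rfl, by simp, by simp⟩
  | succ k ih =>
    intro S hvS hcnt hcard
    obtain ⟨y₀, hy₀⟩ := Finset.card_pos.mp (show 0 < S.card by omega)
    obtain ⟨B, hBsub, hBcard⟩ := Finset.exists_subset_card_eq (hcnt y₀ hy₀)
    have hBmem : ∀ A ∈ B, A ∈ H ∧ y₀ ∈ A ∧ v ∈ A := by
      intro A hA
      have := hBsub hA
      simp only [mem_filter] at this
      tauto
    set S' := S.filter (fun u => ∀ A ∈ B, u ∉ A) with hS'
    -- card bound
    obtain ⟨A₁, A₂, hA12, hBeq⟩ := Finset.card_eq_two.mp hBcard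
    have hvy₀ : v ≠ y₀ := fun h => hvS (h ▸ hy₀)
    have hTcard : ((A₁ ∪ A₂).erase v).card ≤ 3 := by
      have h1 : A₁ ∈ B := by rw [hBeq]; simp
      have h2 : A₂ ∈ B := by rw [hBeq]; simp
      have hi : ({v, y₀} : Finset V) ⊆ A₁ ∩ A₂ := by
        intro x hx
        simp only [mem_insert, mem_singleton] at hx
        rcases hx with rfl | rfl <;>
          simp [mem_inter, (hBmem _ h1).2.1, (hBmem _ h1).2.2,
            (hBmem _ h2).2.1, (hBmem _ h2).2.2]
      have hic : 2 ≤ (A₁ ∩ A₂).card := by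
        calc 2 = ({v, y₀} : Finset V).card := by rw [Finset.card_insert_of_notMem (by simpa using hvy₀), Finset.card_singleton]
        _ ≤ _ := Finset.card_le_card hi
      have hu := Finset.card_union_add_card_inter A₁ A₂
      have hv1 : v ∈ A₁ ∪ A₂ := mem_union_left _ (hBmem _ h1).2.2
      have := Finset.card_erase_of_mem hv1
      have c1 := hunif _ (hBmem _ h1).1
      have c2 := hunif _ (hBmem _ h2).1
      omega
    have hsplit : S ⊆ S' ∪ (A₁ ∪ A₂).erase v := by
      intro u hu
      by_cases h : ∀ A ∈ B, u ∉ A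
      · exact mem_union_left _ (mem_filter.mpr ⟨hu, h⟩)
      · push_neg at h
        obtain ⟨A, hA, huA⟩ := h
        have huv : u ≠ v := fun h => hvS (h ▸ hu)
        rw [hBeq] at hA
        simp only [mem_insert, mem_singleton] at hA
        refine mem_union_right _ (mem_erase.mpr ⟨huv, ?_⟩)
        rcases hA with rfl | rfl
        · exact mem_union_left _ huA
        · exact mem_union_right _ huA
    have hS'card : S.card ≤ S'.card + 3 := by
      calc S.card ≤ (S' ∪ (A₁ ∪ A₂).erase v).card := Finset.card_le_card hsplit
        _ ≤ S'.card + ((A₁ ∪ A₂).erase v).card := Finset.card_union_le _ _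
        _ ≤ S'.card + 3 := by omega
    have hvS' : v ∉ S' := fun h => hvS (mem_filter.mp h).1
    have hcnt' : ∀ u ∈ S', 2 ≤ (H.filter (fun A => u ∈ A ∧ v ∈ A)).card :=
      fun u hu => hcnt u (mem_filter.mp hu).1
    obtain ⟨ys', hsub', g', hcard', hg', hdisj'⟩ := ih S' hvS' hcnt' (by omega)
    have hy₀S' : y₀ ∉ S' := by
      intro h
      have h1 : A₁ ∈ B := by rw [hBeq]; simp
      exact (mem_filter.mp h).2 A₁ h1 (hBmem _ h1).2.1
    have hy₀ys' : y₀ ∉ ys' := fun h => hy₀S' (hsub' h)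
    refine ⟨insert y₀ ys', ?_, fun u => if u = y₀ then B else g' u, ?_, ?_, ?_⟩
    · intro u hu
      rcases mem_insert.mp hu with rfl | hu
      · exact hy₀
      · exact (mem_filter.mp (hsub' hu)).1
    · rw [Finset.card_insert_of_notMem hy₀ys', hcard']
    · intro y hy
      rcases mem_insert.mp hy with rfl | hy
      · simp only [if_pos rfl]
        exact ⟨hBsub, hBcard⟩
      · have hne : y ≠ y₀ := fun h => hy₀ys' (h ▸ hy)
        simp only [if_neg hne]
        exact hg' y hy
    · have hdisjB : ∀ y' ∈ ys', Disjoint B (g' y') := by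
        intro y' hy'
        rw [Finset.disjoint_left]
        intro A hAB hAg
        have : y' ∈ A := ((mem_filter.mp ((hg' y' hy').1 hAg)).2).1
        exact (mem_filter.mp (hsub' hy')).2 A hAB this
      intro y hy y' hy' hne
      rcases mem_insert.mp hy with h1 | h1 <;> rcases mem_insert.mp hy' with h2 | h2
      · exact absurd (h1.trans h2.symm) hne
      · have h2' : y' ≠ y₀ := fun h => hy₀ys' (h ▸ h2)
        simp only [if_pos h1, if_neg h2']
        exact hdisjB y' h2
      · have h1' : y ≠ y₀ := fun h => hy₀ys' (h ▸ h1)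
        simp only [if_pos h2, if_neg h1']
        exact (hdisjB y h1).symm
      · have h1' : y ≠ y₀ := fun h => hy₀ys' (h ▸ h1)
        have h2' : y' ≠ y₀ := fun h => hy₀ys' (h ▸ h2)
        simp only [if_neg h1', if_neg h2']
        exact hdisj' y h1 y' h2 hne

theorem heavy_graph_max_degree_lt {V : Type*} [Fintype V] [DecidableEq V] (r : ℕ)
    (H : Finset (Finset V)) (hunif : ∀ A ∈ H, A.card = 3)
    (hfree : ¬ HasBergeCopy H (starGraph r) 2) :
    ∀ v : V,
      (Finset.univ.filter (fun u => u ≠ v ∧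
        2 ≤ (H.filter (fun A => u ∈ A ∧ v ∈ A)).card)).card < 3 * r := by
  intro v
  by_contra hdeg
  push_neg at hdeg
  set S := Finset.univ.filter (fun u => u ≠ v ∧
    2 ≤ (H.filter (fun A => u ∈ A ∧ v ∈ A)).card) with hSdef
  have hSne : ∀ u ∈ S, u ≠ v := fun u hu => ((mem_filter.mp hu).2).1
  have hvS : v ∉ S := fun h => hSne v h rfl
  have hcnt : ∀ u ∈ S, 2 ≤ (H.filter (fun A => u ∈ A ∧ v ∈ A)).card :=
    fun u hu => ((mem_filter.mp hu).2).2
  obtain ⟨ys, hsub, g, hyscard, hg, hdisj⟩ :=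
    star_aux v H hunif r S hvS hcnt (by omega)
  apply hfree
  have e : { x // x ∈ ys } ≃ Fin r := ys.equivFinOfCardEq hyscard
  set i : Fin (r + 1) → V := fun j =>
    if h : j = 0 then v else ((e.symm (j.pred h) : { x // x ∈ ys }) : V) with hidef
  have hi0 : i 0 = v := by simp [hidef]
  have himem : ∀ j : Fin (r + 1), j ≠ 0 → i j ∈ ys := by
    intro j h
    simp only [hidef, dif_neg h]
    exact (e.symm (j.pred h)).2
  have hinj : Function.Injective i := by
    intro a b hab
    by_cases ha : a = 0 <;> by_cases hb : b = 0
    · rw [ha, hb]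
    · exfalso
      have hm := himem b hb
      rw [← hab, ha, hi0] at hm
      exact hSne v (hsub hm) rfl
    · exfalso
      have hm := himem a ha
      rw [hab, hb, hi0] at hm
      exact hSne v (hsub hm) rfl
    · have h1 : ((e.symm (a.pred ha) : { x // x ∈ ys }) : V)
          = ((e.symm (b.pred hb) : { x // x ∈ ys }) : V) := by
        simpa only [hidef, dif_neg ha, dif_neg hb] using hab
      have h3 : a.pred ha = b.pred hb := e.symm.injective (Subtype.ext h1)
      have := congrArg Fin.succ h3
      rwa [Fin.succ_pred, Fin.succ_pred] at this
  set kf : Fin (r + 1) → Finset (Finset V) :=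
    fun j => if j = 0 then ∅ else g (i j) with hkf
  set hfun : Sym2 (Fin (r + 1)) → Finset (Finset V) :=
    Sym2.lift ⟨fun a b => kf a ∪ kf b, fun a b => union_comm _ _⟩ with hhfun
  have hedge : ∀ e' ∈ (starGraph r).edgeSet, ∃ b : Fin (r + 1), b ≠ 0 ∧ e' = s(0, b) := by
    intro e' he'
    induction e' using Sym2.ind with
    | _ a b =>
      rw [SimpleGraph.mem_edgeSet, starGraph, SimpleGraph.fromRel_adj] at he'
      obtain ⟨hne, h0⟩ := he'
      rcases h0 with h | h
      · exact ⟨b, fun hb => hne (h.trans hb.symm), by rw [h]⟩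
      · exact ⟨a, fun ha => hne (ha.trans h.symm), by rw [h, Sym2.eq_swap]⟩
  have hval : ∀ b : Fin (r + 1), b ≠ 0 → hfun s(0, b) = g (i b) := by
    intro b hb
    simp [hhfun, hkf, Sym2.lift_mk, if_neg hb]
  refine ⟨⟨i, hinj⟩, hfun, ?_, ?_⟩
  · intro e' he'
    obtain ⟨b, hb0, rfl⟩ := hedge e' he'
    have hgb := hg (i b) (himem b hb0)
    rw [hval b hb0]
    refine ⟨hgb.1.trans (filter_subset _ _), hgb.2, ?_⟩
    intro A hA x hx
    have hAf := mem_filter.mp (hgb.1 hA)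
    rcases Sym2.mem_iff.mp hx with h | h
    · show i x ∈ A; rw [h, hi0]; exact hAf.2.2
    · show i x ∈ A; rw [h]; exact hAf.2.1
  · intro e1 he1 e2 he2 hne
    obtain ⟨b1, hb1, rfl⟩ := hedge e1 he1
    obtain ⟨b2, hb2, rfl⟩ := hedge e2 he2
    have hbne : b1 ≠ b2 := by
      intro h; exact hne (by rw [h])
    rw [hval b1 hb1, hval b2 hb2]
    exact hdisj (i b1) (himem b1 hb1) (i b2) (himem b2 hb2)
      (fun h => hbne (hinj h))
end

section
/- For any r ≥ 2, ex_3(n, B_2 S_r) ≤ (1 + o(1))·n²/4, where S_r is the star with r edges; i.e., any 3-uniform hypergraph on n vertices with no 2-wise Berge copy of S_r has at most n²/4 + O(n) hyperedges. -/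
open Finset

def heavySet {n : ℕ} (H : Finset (Finset (Fin n))) (v : Fin n) : Finset (Fin n) :=
  univ.filter (fun u => u ≠ v ∧ 2 ≤ (H.filter (fun A => v ∈ A ∧ u ∈ A)).card)

lemma greedy {n : ℕ} (H : Finset (Finset (Fin n))) (hH3 : ∀ A ∈ H, A.card = 3) (v : Fin n) :
    ∀ (k : ℕ) (L : Finset (Fin n)), L ⊆ heavySet H v → 6 * k ≤ L.card →
    ∃ (T : Finset (Fin n)) (g : Fin n → Finset (Finset (Fin n))),
      T ⊆ L ∧ T.card = k ∧
      (∀ u ∈ T, g u ⊆ H.filter (fun A => v ∈ A ∧ u ∈ A) ∧ (g u).card = 2) ∧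
      (∀ u ∈ T, ∀ u' ∈ T, u ≠ u' → Disjoint (g u) (g u')) := by
  intro k
  induction k with
  | zero =>
    intro L _ _
    exact ⟨∅, fun _ => ∅, by simp, by simp, by simp, by simp⟩
  | succ k ih =>
    intro L hL hcard
    have hLne : L.Nonempty := by
      rw [← Finset.card_pos]; omega
    obtain ⟨u, hu⟩ := hLne
    have huH : u ∈ heavySet H v := hL hu
    have huH' : 2 ≤ (H.filter (fun A => v ∈ A ∧ u ∈ A)).card := by
      simp only [heavySet, mem_filter] at huH; exact huH.2.2
    obtain ⟨gu, hgu_sub, hgu_card⟩ := Finset.exists_subset_card_eq huH'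
    obtain ⟨B1, B2, hB12, hgu_eq⟩ := Finset.card_eq_two.mp hgu_card
    have hB1 : B1 ∈ H.filter (fun A => v ∈ A ∧ u ∈ A) := hgu_sub (by simp [hgu_eq])
    have hB2 : B2 ∈ H.filter (fun A => v ∈ A ∧ u ∈ A) := hgu_sub (by simp [hgu_eq])
    set Bl := B1 ∪ B2 with hBl
    have hBl_card : Bl.card ≤ 6 := by
      have h1 : B1.card = 3 := hH3 B1 (mem_filter.mp hB1).1
      have h2 : B2.card = 3 := hH3 B2 (mem_filter.mp hB2).1
      calc Bl.card ≤ B1.card + B2.card := Finset.card_union_le _ _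
        _ = 6 := by omega
    have huBl : u ∈ Bl := Finset.mem_union_left _ (mem_filter.mp hB1).2.2
    set L' := L \ Bl with hL'
    have hL'card : 6 * k ≤ L'.card := by
      have hstep : L.card ≤ L'.card + Bl.card := by
        rw [hL']; exact Finset.card_le_card_sdiff_add_card
      omega
    obtain ⟨T', g', hT'L, hT'card, hg'prop, hg'disj⟩ := ih L' (fun x hx => hL (Finset.mem_sdiff.mp hx).1) hL'card
    have huT' : u ∉ T' := fun h => (Finset.mem_sdiff.mp (hT'L h)).2 huBl
    refine ⟨insert u T', fun w => if w = u then {B1, B2} else g' w, ?_, ?_, ?_, ?_⟩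
    · intro x hx
      rcases Finset.mem_insert.mp hx with h | h
      · exact h ▸ hu
      · exact (Finset.mem_sdiff.mp (hT'L h)).1
    · rw [Finset.card_insert_of_notMem huT', hT'card]
    · intro w hw
      rcases Finset.mem_insert.mp hw with h | h
      · subst h
        simp only [if_pos rfl]
        rw [← hgu_eq]
        exact ⟨hgu_sub, hgu_card⟩
      · have hwu : w ≠ u := fun he => huT' (he ▸ h)
        simp only [if_neg hwu]
        exact hg'prop w h
    · intro w hw w' hw' hne
      have key : ∀ x ∈ T', Disjoint ({B1, B2} : Finset (Finset (Fin n))) (g' x) := by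
        intro x hx
        rw [Finset.disjoint_left]
        intro B hBmem hBmem'
        have hxBl : x ∉ Bl := (Finset.mem_sdiff.mp (hT'L hx)).2
        have hxB : x ∈ B := (mem_filter.mp ((hg'prop x hx).1 hBmem')).2.2
        rcases Finset.mem_insert.mp hBmem with h | h
        · exact hxBl (Finset.mem_union_left _ (h ▸ hxB))
        · exact hxBl (Finset.mem_union_right _ ((Finset.mem_singleton.mp h) ▸ hxB))
      rcases Finset.mem_insert.mp hw with h | h <;> rcases Finset.mem_insert.mp hw' with h' | h'
      · exact absurd (h.trans h'.symm) hne
      · have hne' : w' ≠ u := fun he => huT' (he ▸ h')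
        rw [h]
        simp only [if_pos rfl, if_neg hne']
        exact key w' h'
      · have hne' : w ≠ u := fun he => huT' (he ▸ h)
        rw [h']
        simp only [if_pos rfl, if_neg hne']
        exact (key w h).symm
      · have hwu : w ≠ u := fun he => huT' (he ▸ h)
        have hw'u : w' ≠ u := fun he => huT' (he ▸ h')
        simp only [if_neg hwu, if_neg hw'u]
        exact hg'disj w h w' h' hne


noncomputable def leafMap {n : ℕ} (r : ℕ) (v : Fin n) (T : Finset (Fin n)) (hT : T.card = r) :
    Fin (r + 1) → Fin n :=
  fun a => if h : a = 0 then v else ((T.orderIsoOfFin hT (a.pred h) : Fin n))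

lemma leafMap_zero {n r : ℕ} (v : Fin n) (T : Finset (Fin n)) (hT : T.card = r) :
    leafMap r v T hT 0 = v := dif_pos rfl

lemma leafMap_mem {n r : ℕ} (v : Fin n) (T : Finset (Fin n)) (hT : T.card = r)
    {a : Fin (r + 1)} (ha : a ≠ 0) : leafMap r v T hT a ∈ T := by
  rw [leafMap, dif_neg ha]
  exact (T.orderIsoOfFin hT (a.pred ha)).2

lemma leafMap_inj {n r : ℕ} (v : Fin n) (T : Finset (Fin n)) (hT : T.card = r)
    (hv : v ∉ T) : Function.Injective (leafMap r v T hT) := by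
  intro a b hab
  by_cases ha : a = 0 <;> by_cases hb : b = 0
  · rw [ha, hb]
  · exfalso; rw [ha, leafMap_zero] at hab
    exact hv (hab ▸ leafMap_mem v T hT hb)
  · exfalso; rw [hb, leafMap_zero] at hab
    exact hv (hab ▸ leafMap_mem v T hT ha)
  · simp only [leafMap, dif_neg ha, dif_neg hb] at hab
    have := (T.orderIsoOfFin hT).injective (Subtype.coe_injective hab)
    have h2 : (a.pred ha).succ = (b.pred hb).succ := by rw [this]
    rwa [Fin.succ_pred, Fin.succ_pred] at h2

lemma heavySet_card_lt {n r : ℕ} (H : Finset (Finset (Fin n)))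
    (hH3 : ∀ A ∈ H, A.card = 3) (hB : ¬ HasBergeCopy H (starGraph r) 2) (v : Fin n) :
    (heavySet H v).card < 6 * r := by
  by_contra hcon
  push_neg at hcon
  obtain ⟨T, g, hTL, hTcard, hgprop, hgdisj⟩ :=
    greedy H hH3 v r (heavySet H v) (Finset.Subset.refl _) hcon
  have hvT : v ∉ T := fun h => (Finset.mem_filter.mp (hTL h)).2.1 rfl
  set f := leafMap r v T hTcard with hf
  have finj := leafMap_inj v T hTcard hvT
  set i : Fin (r + 1) ↪ Fin n := ⟨f, finj⟩ with hi
  have hsym : ∀ x y : Fin (r + 1),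
      (if x = 0 then g (f y) else if y = 0 then g (f x) else ∅) =
      (if y = 0 then g (f x) else if x = 0 then g (f y) else ∅) := by
    intro x y
    by_cases hx : x = 0 <;> by_cases hy : y = 0 <;> simp [hx, hy]
  set hfun : Sym2 (Fin (r + 1)) → Finset (Finset (Fin n)) :=
    Sym2.lift ⟨fun x y => if x = 0 then g (f y) else if y = 0 then g (f x) else ∅, hsym⟩
    with hhfun
  have hval : ∀ w : Fin (r + 1), w ≠ 0 → hfun s(0, w) = g (f w) := by
    intro w hw
    rw [hhfun, Sym2.lift_mk]
    simp
  have edge_char : ∀ e ∈ (starGraph r).edgeSet, ∃ w, w ≠ 0 ∧ e = s(0, w) := by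
    intro e he
    induction e using Sym2.ind with
    | _ x y =>
      rw [SimpleGraph.mem_edgeSet, starGraph, SimpleGraph.fromRel_adj] at he
      obtain ⟨hne, h0⟩ := he
      rcases h0 with h | h
      · exact ⟨y, fun hy => hne (h.trans hy.symm), by rw [h]⟩
      · exact ⟨x, fun hx => hne (hx.trans h.symm), by rw [h, Sym2.eq_swap]⟩
  refine hB ⟨i, hfun, ?_, ?_⟩
  · intro e he
    obtain ⟨w, hw0, rfl⟩ := edge_char e he
    have hfwT : f w ∈ T := leafMap_mem v T hTcard hw0
    obtain ⟨hsub, hcard2⟩ := hgprop (f w) hfwT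
    rw [hval w hw0]
    refine ⟨fun B hBm => (Finset.mem_filter.mp (hsub hBm)).1, hcard2, ?_⟩
    intro A hA x hx
    have hA' := Finset.mem_filter.mp (hsub hA)
    rcases Sym2.mem_iff.mp hx with h | h
    · subst h
      show f 0 ∈ A
      rw [hf, leafMap_zero]
      exact hA'.2.1
    · subst h
      exact hA'.2.2
  · intro e he e' he' hne
    obtain ⟨w, hw0, rfl⟩ := edge_char e he
    obtain ⟨w', hw'0, rfl⟩ := edge_char e' he'
    have hww' : w ≠ w' := fun h => hne (by rw [h])
    rw [hval w hw0, hval w' hw'0]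
    exact hgdisj (f w) (leafMap_mem v T hTcard hw0) (f w') (leafMap_mem v T hTcard hw'0)
      (fun h => hww' (finj h))


theorem exBerge_star_upper (r : ℕ) (hr : 2 ≤ r) :
    ∃ C : ℝ, ∀ (n : ℕ) (H : Finset (Finset (Fin n))),
      (∀ A ∈ H, A.card = 3) → ¬ HasBergeCopy H (starGraph r) 2 →
      (H.card : ℝ) ≤ (n : ℝ) ^ 2 / 4 + C * (n : ℝ) := by
  classical
  refine ⟨36 * (r : ℝ) ^ 2, ?_⟩
  intro n H hH3 hB
  have hLv : ∀ v, (heavySet H v).card ≤ 6 * r :=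
    fun v => le_of_lt (heavySet_card_lt H hH3 hB v)
  set Bd := H.filter (fun A => ∃ v, ∃ x ∈ heavySet H v, ∃ y ∈ heavySet H v,
    x ≠ y ∧ A = {v, x, y}) with hBd
  set Gd := H \ Bd with hGd
  -- bound on Bd
  have hBd_le : Bd.card ≤ 36 * r ^ 2 * n := by
    have hsub : Bd ⊆ univ.biUnion (fun v => ((heavySet H v) ×ˢ (heavySet H v)).image
        (fun p => insert v (insert p.1 {p.2}))) := by
      intro A hA
      obtain ⟨v, x, hx, y, hy, _, hAe⟩ := (mem_filter.mp hA).2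
      simp only [mem_biUnion, mem_image, mem_product, Prod.exists]
      exact ⟨v, mem_univ v, x, y, ⟨hx, hy⟩, hAe.symm⟩
    calc Bd.card ≤ _ := card_le_card hsub
      _ ≤ ∑ v, (((heavySet H v) ×ˢ (heavySet H v)).image
          (fun p => insert v (insert p.1 {p.2}))).card := card_biUnion_le
      _ ≤ ∑ _v : Fin n, 36 * r ^ 2 := by
          apply Finset.sum_le_sum
          intro v _
          calc _ ≤ ((heavySet H v) ×ˢ (heavySet H v)).card := card_image_le
            _ = (heavySet H v).card * (heavySet H v).card := card_product _ _
            _ ≤ (6 * r) * (6 * r) := Nat.mul_le_mul (hLv v) (hLv v)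
            _ = 36 * r ^ 2 := by ring
      _ = 36 * r ^ 2 * n := by simp [mul_comm]
  -- unique pairs
  set U : Finset (Fin n) → Finset (Finset (Fin n)) :=
    fun A => (A.powersetCard 2).filter
      (fun p => ¬ 2 ≤ (H.filter (fun B => p ⊆ B)).card) with hUdef
  have hU2 : ∀ A ∈ Gd, 2 ≤ (U A).card := by
    intro A hAGd
    have hAH : A ∈ H := (mem_sdiff.mp hAGd).1
    have hABd : A ∉ Bd := (mem_sdiff.mp hAGd).2
    have hA3 : A.card = 3 := hH3 A hAH
    have htot : (A.powersetCard 2).card = 3 := by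
      rw [card_powersetCard, hA3]
      decide
    by_contra hcon
    push_neg at hcon
    have hsplit := Finset.card_filter_add_card_filter_not
      (s := A.powersetCard 2) (p := fun p => 2 ≤ (H.filter (fun B => p ⊆ B)).card)
    have hUeq : (U A).card = ((A.powersetCard 2).filter
        (fun p => ¬ 2 ≤ (H.filter (fun B => p ⊆ B)).card)).card := rfl
    have hW : 2 ≤ ((A.powersetCard 2).filter
        (fun p => 2 ≤ (H.filter (fun B => p ⊆ B)).card)).card := by
      omega
    obtain ⟨p, hp, q, hq, hpq⟩ := Finset.one_lt_card.mp hW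
    have hpheavy := (mem_filter.mp hp).2
    have hqheavy := (mem_filter.mp hq).2
    obtain ⟨hpA, hp2⟩ := mem_powersetCard.mp (mem_filter.mp hp).1
    obtain ⟨hqA, hq2⟩ := mem_powersetCard.mp (mem_filter.mp hq).1
    -- p ∩ q has exactly one element
    have hun : (p ∪ q).card ≤ 3 := by
      calc (p ∪ q).card ≤ A.card := card_le_card (union_subset hpA hqA)
        _ = 3 := hA3
    have hinter := Finset.card_union_add_card_inter p q
    have hi1 : 1 ≤ (p ∩ q).card := by omega
    have hi2 : (p ∩ q).card ≤ 1 := by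
      by_contra hi
      push_neg at hi
      have hle : p.card ≤ (p ∩ q).card := by
        have := card_le_card (Finset.inter_subset_left : p ∩ q ⊆ p)
        omega
      have hpq' : p ∩ q = p := eq_of_subset_of_card_le inter_subset_left hle
      have hsub : p ⊆ q := by rw [← hpq']; exact inter_subset_right
      exact hpq (eq_of_subset_of_card_le hsub (by omega))
    have : (p ∩ q).card = 1 := le_antisymm hi2 hi1
    obtain ⟨v, hv⟩ := card_eq_one.mp this
    have hvp : v ∈ p := (mem_inter.mp (hv ▸ mem_singleton_self v)).1
    have hvq : v ∈ q := (mem_inter.mp (hv ▸ mem_singleton_self v)).2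
    -- extract other elements
    have hx : ∃ x, x ≠ v ∧ p = {v, x} := by
      obtain ⟨a, b, hab, hpe⟩ := card_eq_two.mp hp2
      rcases (by rw [hpe] at hvp; simpa using hvp : v = a ∨ v = b) with h | h
      · exact ⟨b, fun hb => hab (by rw [← h, ← hb]), by rw [hpe, h]⟩
      · exact ⟨a, fun ha => hab (by rw [ha, h]), by rw [hpe, h, pair_comm]⟩
    have hy : ∃ y, y ≠ v ∧ q = {v, y} := by
      obtain ⟨a, b, hab, hqe⟩ := card_eq_two.mp hq2
      rcases (by rw [hqe] at hvq; simpa using hvq : v = a ∨ v = b) with h | h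
      · exact ⟨b, fun hb => hab (by rw [← h, ← hb]), by rw [hqe, h]⟩
      · exact ⟨a, fun ha => hab (by rw [ha, h]), by rw [hqe, h, pair_comm]⟩
    obtain ⟨x, hxv, hpe⟩ := hx
    obtain ⟨y, hyv, hqe⟩ := hy
    have hxy : x ≠ y := by
      intro h
      exact hpq (by rw [hpe, hqe, h])
    have hheavy : ∀ z, z ≠ v → {v, z} ⊆ A →
        2 ≤ (H.filter (fun B => ({v, z} : Finset (Fin n)) ⊆ B)).card →
        z ∈ heavySet H v := by
      intro z hzv _ hh
      rw [heavySet, mem_filter]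
      refine ⟨mem_univ z, hzv, ?_⟩
      have : H.filter (fun B => ({v, z} : Finset (Fin n)) ⊆ B) =
          H.filter (fun B => v ∈ B ∧ z ∈ B) := by
        apply filter_congr
        intro B _
        simp [insert_subset_iff]
      rwa [this] at hh
    have hxmem : x ∈ heavySet H v := hheavy x hxv (hpe ▸ hpA) (by rw [← hpe]; exact hpheavy)
    have hymem : y ∈ heavySet H v := hheavy y hyv (hqe ▸ hqA) (by rw [← hqe]; exact hqheavy)
    -- A = {v, x, y}
    have hsubA : ({v, x, y} : Finset (Fin n)) ⊆ A := by
      intro z hz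
      rcases mem_insert.mp hz with h | hz'
      · exact hpA (h ▸ (by rw [hpe]; exact mem_insert_self _ _))
      · rcases mem_insert.mp hz' with h | h
        · exact hpA (by rw [hpe, h]; exact mem_insert_of_mem (mem_singleton_self _))
        · rw [mem_singleton] at h
          exact hqA (by rw [hqe, h]; exact mem_insert_of_mem (mem_singleton_self _))
    have hcard3 : ({v, x, y} : Finset (Fin n)).card = 3 := by
      rw [card_insert_of_notMem (by simp [hxv.symm, hyv.symm, Ne.symm]),
        card_insert_of_notMem (by simp [hxy]), card_singleton]
    have hAeq : A = {v, x, y} :=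
      (eq_of_subset_of_card_le hsubA (by omega)).symm
    exact hABd (mem_filter.mpr ⟨hAH, v, x, hxmem, y, hymem, hxy, hAeq⟩)
  -- disjointness of U over Gd
  have hdisj : ∀ A ∈ Gd, ∀ A' ∈ Gd, A ≠ A' → Disjoint (U A) (U A') := by
    intro A hA A' hA' hne
    rw [disjoint_left]
    intro p hpA hpA'
    have h1 := mem_filter.mp hpA
    have h2 := mem_filter.mp hpA'
    have hps1 : p ⊆ A := (mem_powersetCard.mp h1.1).1
    have hps2 : p ⊆ A' := (mem_powersetCard.mp h2.1).1
    apply h1.2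
    have : ({A, A'} : Finset (Finset (Fin n))) ⊆ H.filter (fun B => p ⊆ B) := by
      intro B hBm
      rcases mem_insert.mp hBm with h | h
      · exact mem_filter.mpr ⟨h ▸ (mem_sdiff.mp hA).1, h ▸ hps1⟩
      · rw [mem_singleton] at h
        exact mem_filter.mpr ⟨h ▸ (mem_sdiff.mp hA').1, h ▸ hps2⟩
    calc 2 = ({A, A'} : Finset (Finset (Fin n))).card := (card_pair hne).symm
      _ ≤ _ := card_le_card this
  -- 2 * Gd ≤ choose n 2
  have hGd_le : 2 * Gd.card ≤ n.choose 2 := by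
    calc 2 * Gd.card = ∑ _A ∈ Gd, 2 := by rw [Finset.sum_const, smul_eq_mul, mul_comm]
      _ ≤ ∑ A ∈ Gd, (U A).card := Finset.sum_le_sum hU2
      _ = (Gd.biUnion U).card := (Finset.card_biUnion hdisj).symm
      _ ≤ ((univ : Finset (Fin n)).powersetCard 2).card := by
          apply card_le_card
          intro p hp
          obtain ⟨A, hA, hpU⟩ := mem_biUnion.mp hp
          have := mem_powersetCard.mp (mem_filter.mp hpU).1
          exact mem_powersetCard.mpr ⟨subset_univ p, this.2⟩
      _ = n.choose 2 := by rw [card_powersetCard, card_univ, Fintype.card_fin]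
  have hGd4 : 4 * Gd.card ≤ n ^ 2 := by
    have h1 : n.choose 2 = n * (n - 1) / 2 := Nat.choose_two_right n
    have h2 := Nat.div_mul_le_self (n * (n - 1)) 2
    have h3 : n * (n - 1) ≤ n ^ 2 := by
      rw [pow_two]
      exact Nat.mul_le_mul_left n (Nat.sub_le n 1)
    omega
  have hcard : H.card = Gd.card + Bd.card := by
    rw [hGd]
    exact (card_sdiff_add_card_eq_card (filter_subset _ _)).symm
  have h1 : (Gd.card : ℝ) ≤ (n : ℝ) ^ 2 / 4 := by
    have : ((4 * Gd.card : ℕ) : ℝ) ≤ ((n ^ 2 : ℕ) : ℝ) := Nat.cast_le.mpr hGd4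
    push_cast at this
    linarith
  have h2 : (Bd.card : ℝ) ≤ 36 * (r : ℝ) ^ 2 * n := by
    have : ((Bd.card : ℕ) : ℝ) ≤ ((36 * r ^ 2 * n : ℕ) : ℝ) := Nat.cast_le.mpr hBd_le
    push_cast at this
    linarith
  rw [hcard]
  push_cast
  linarith
end

section
/- ex_3(n, H_2 K_3) ≤ C(n,2): every 3-uniform hypergraph on n vertices with no 2-heavy copy of a triangle has at most C(n,2) hyperedges. Consequently ex_3(n, H_2 K_3) = (1 + o(1))·n²/2. -/
open Finset

lemma upper (n : ℕ) (H : Finset (Finset (Fin n))) (h3 : ∀ A ∈ H, A.card = 3)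
    (hnh : ¬ HasHeavyCopy H (⊤ : SimpleGraph (Fin 3)) 2) : H.card ≤ n.choose 2 := by
  have key : ∀ A, A ∈ H → ∃ p : Finset (Fin n), p.card = 2 ∧
      H.filter (fun B => p ⊆ B) = {A} := by
    intro A hA
    by_contra hcon
    push_neg at hcon
    obtain ⟨a, b, c, hab, hac, hbc, hAeq⟩ := Finset.card_eq_three.mp (h3 A hA)
    have hpair : ∀ u v : Fin n, u ∈ A → v ∈ A → u ≠ v →
        2 ≤ (H.filter (fun B => u ∈ B ∧ v ∈ B)).card := by
      intro u v hu hv huv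
      have hp2 : ({u, v} : Finset (Fin n)).card = 2 := by
        rw [Finset.card_insert_of_notMem (by simpa using huv), Finset.card_singleton]
      have hfe : H.filter (fun B => ({u, v} : Finset (Fin n)) ⊆ B)
          = H.filter (fun B => u ∈ B ∧ v ∈ B) := by
        apply Finset.filter_congr
        intro B _
        simp [Finset.insert_subset_iff]
      have hne := hcon {u, v} hp2
      rw [hfe] at hne
      have hAmem : A ∈ H.filter (fun B => u ∈ B ∧ v ∈ B) :=
        Finset.mem_filter.mpr ⟨hA, hu, hv⟩
      by_contra hlt
      push_neg at hlt
      apply hne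
      apply Finset.eq_singleton_iff_unique_mem.mpr
      refine ⟨hAmem, fun B hB => ?_⟩
      have := Finset.card_le_one.mp (by omega) B hB A hAmem
      exact this
    apply hnh
    have hinj : Function.Injective ![a, b, c] := by
      intro x y hxy
      fin_cases x <;> fin_cases y <;> simp_all
    refine ⟨⟨![a, b, c], hinj⟩, fun x y hxy => ?_⟩
    have hadj : x ≠ y := (SimpleGraph.top_adj x y).mp hxy
    have hmem : ∀ z : Fin 3, ![a, b, c] z ∈ A := by
      intro z; fin_cases z <;> simp [hAeq]
    exact hpair _ _ (hmem x) (hmem y) (fun h => hadj (hinj h))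
  choose! f hf using key
  have hcard : (univ.powersetCard 2 : Finset (Finset (Fin n))).card = n.choose 2 := by
    simp [Finset.card_powersetCard]
  rw [← hcard]
  apply Finset.card_le_card_of_injOn f
  · intro A hA
    have hA2 := (hf A hA).1
    simpa [Finset.mem_powersetCard_univ] using hA2
  · intro A hA B hB hfAB
    have h1 := (hf A hA).2
    have h2 := (hf B hB).2
    rw [hfAB, h2] at h1
    exact (Finset.singleton_inj.mp h1).symm

lemma lower (n : ℕ) (hn : 1 ≤ n) :
    ∃ H : Finset (Finset (Fin n)), (∀ A ∈ H, A.card = 3) ∧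
      ¬ HasHeavyCopy H (⊤ : SimpleGraph (Fin 3)) 2 ∧ H.card = (n - 1).choose 2 := by
  set z : Fin n := ⟨0, hn⟩ with hz
  set H : Finset (Finset (Fin n)) :=
    ((univ.erase z).powersetCard 2).image (insert z) with hH
  have hmemS : ∀ S ∈ (univ.erase z).powersetCard 2, z ∉ S ∧ S.card = 2 := by
    intro S hS
    rw [Finset.mem_powersetCard] at hS
    exact ⟨fun h => (Finset.mem_erase.mp (hS.1 h)).1 rfl, hS.2⟩
  refine ⟨H, ?_, ?_, ?_⟩
  · intro A hA
    obtain ⟨S, hS, rfl⟩ := Finset.mem_image.mp hA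
    obtain ⟨hzS, hS2⟩ := hmemS S hS
    rw [Finset.card_insert_of_notMem hzS, hS2]
  · rintro ⟨i, hi⟩
    -- pick x y with i x ≠ z, i y ≠ z, x ≠ y
    have hiinj := i.injective
    obtain ⟨x, y, hxy, hx, hy⟩ : ∃ x y : Fin 3, x ≠ y ∧ i x ≠ z ∧ i y ≠ z := by
      by_cases h0 : i 0 = z
      · refine ⟨1, 2, by decide, fun h => ?_, fun h => ?_⟩
        · rw [← h0] at h; exact absurd (hiinj h) (by decide)
        · rw [← h0] at h; exact absurd (hiinj h) (by decide)
      · by_cases h1 : i 1 = z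
        · refine ⟨0, 2, by decide, h0, fun h => ?_⟩
          rw [← h1] at h; exact absurd (hiinj h) (by decide)
        · exact ⟨0, 1, by decide, h0, h1⟩
    have h2 := hi x y ((SimpleGraph.top_adj x y).mpr hxy)
    have hsub : H.filter (fun A => i x ∈ A ∧ i y ∈ A) ⊆ {insert z {i x, i y}} := by
      intro B hB
      rw [Finset.mem_filter] at hB
      obtain ⟨hBH, hu, hv⟩ := hB
      obtain ⟨S, hS, rfl⟩ := Finset.mem_image.mp hBH
      obtain ⟨hzS, hS2⟩ := hmemS S hS
      have huS : i x ∈ S := by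
        rcases Finset.mem_insert.mp hu with h | h
        · exact absurd h hx
        · exact h
      have hvS : i y ∈ S := by
        rcases Finset.mem_insert.mp hv with h | h
        · exact absurd h hy
        · exact h
      have hne : i x ≠ i y := fun h => hxy (hiinj h)
      have hsub2 : ({i x, i y} : Finset (Fin n)) ⊆ S := by
        intro w hw
        rcases Finset.mem_insert.mp hw with h | h
        · exact h ▸ huS
        · exact (Finset.mem_singleton.mp h) ▸ hvS
      have hScard : S.card ≤ ({i x, i y} : Finset (Fin n)).card := by
        rw [Finset.card_insert_of_notMem (by simpa using hne), Finset.card_singleton, hS2]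
      have := Finset.eq_of_subset_of_card_le hsub2 hScard
      simp [this]
    have := Finset.card_le_card hsub
    simp at this
    omega
  · rw [hH, Finset.card_image_of_injOn, Finset.card_powersetCard,
      Finset.card_erase_of_mem (Finset.mem_univ z), Finset.card_univ, Fintype.card_fin]
    intro S hS T hT hST
    have hzS := (hmemS S hS).1
    have hzT := (hmemS T hT).1
    have : (insert z S).erase z = (insert z T).erase z := by rw [hST]
    rwa [Finset.erase_insert hzS, Finset.erase_insert hzT] at this

lemma tendsto_one_div : Filter.Tendsto (fun n : ℕ => (1:ℝ)/n) Filter.atTop (nhds 0) :=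
  Filter.Tendsto.div_atTop tendsto_const_nhds tendsto_natCast_atTop_atTop

lemma tendsto_two_div : Filter.Tendsto (fun n : ℕ => (2:ℝ)/n) Filter.atTop (nhds 0) :=
  Filter.Tendsto.div_atTop tendsto_const_nhds tendsto_natCast_atTop_atTop

lemma tendsto_upper :
    Filter.Tendsto (fun n : ℕ => ((n.choose 2 : ℕ) : ℝ)/(n:ℝ)^2) Filter.atTop (nhds (1/2)) := by
  have h1 : Filter.Tendsto (fun n : ℕ => (1 - ((n:ℝ))⁻¹)/2) Filter.atTop (nhds (1/2)) := by
    have := (Filter.Tendsto.sub (tendsto_const_nhds (x := (1:ℝ))) tendsto_one_div).div_const 2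
    norm_num at this
    exact this
  apply h1.congr'
  filter_upwards [Filter.eventually_ge_atTop 1] with n hn
  have hn0 : (n:ℝ) ≠ 0 := Nat.cast_ne_zero.mpr (by omega)
  rw [Nat.cast_choose_two]
  field_simp

lemma tendsto_lower :
    Filter.Tendsto (fun n : ℕ => (((n-1).choose 2 : ℕ) : ℝ)/(n:ℝ)^2) Filter.atTop
      (nhds (1/2)) := by
  have h1 : Filter.Tendsto (fun n : ℕ => (1 - ((n:ℝ))⁻¹) * (1 - 2/(n:ℝ))/2) Filter.atTop
      (nhds (1/2)) := by
    have := (Filter.Tendsto.mul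
      (Filter.Tendsto.sub (tendsto_const_nhds (x := (1:ℝ))) tendsto_one_div)
      (Filter.Tendsto.sub (tendsto_const_nhds (x := (1:ℝ))) tendsto_two_div)).div_const 2
    norm_num at this
    exact this
  apply h1.congr'
  filter_upwards [Filter.eventually_ge_atTop 2] with n hn
  have hn0 : (n:ℝ) ≠ 0 := Nat.cast_ne_zero.mpr (by omega)
  have hc : (((n-1):ℕ):ℝ) = (n:ℝ) - 1 := by
    rw [Nat.cast_sub (by omega)]; norm_num
  rw [Nat.cast_choose_two, hc]
  have hc2 : (n:ℝ) - 1 - 1 = (n:ℝ) - 2 := by ring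
  rw [hc2, div_div, eq_div_iff (by positivity)]
  field_simp

theorem exHeavy_triangle :
    (∀ (n : ℕ) (H : Finset (Finset (Fin n))), (∀ A ∈ H, A.card = 3) →
      ¬ HasHeavyCopy H (⊤ : SimpleGraph (Fin 3)) 2 → H.card ≤ n.choose 2) ∧
    Filter.Tendsto
      (fun n : ℕ => (exHeavy n 3 2 (⊤ : SimpleGraph (Fin 3)) : ℝ) / (n : ℝ) ^ 2)
      Filter.atTop (nhds (1 / 2)) := by
  have hub : ∀ n : ℕ, exHeavy n 3 2 (⊤ : SimpleGraph (Fin 3)) ≤ n.choose 2 := by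
    intro n
    apply csSup_le'
    rintro m ⟨H, h1, h2, rfl⟩
    exact upper n H h1 h2
  have hlb : ∀ n : ℕ, 1 ≤ n → (n-1).choose 2 ≤ exHeavy n 3 2 (⊤ : SimpleGraph (Fin 3)) := by
    intro n hn
    obtain ⟨H, h1, h2, h3⟩ := lower n hn
    exact le_csSup ⟨n.choose 2, by rintro m ⟨H', g1, g2, rfl⟩; exact upper n H' g1 g2⟩
      ⟨H, h1, h2, h3⟩
  constructor
  · exact upper
  · refine tendsto_of_tendsto_of_tendsto_of_le_of_le' tendsto_lower tendsto_upper ?_ ?_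
    · filter_upwards [Filter.eventually_ge_atTop 1] with n hn
      have h := hlb n hn
      have : (((n-1).choose 2 : ℕ) : ℝ) ≤ (exHeavy n 3 2 (⊤ : SimpleGraph (Fin 3)) : ℝ) := by
        exact_mod_cast h
      gcongr
    · filter_upwards with n
      have h := hub n
      have : ((exHeavy n 3 2 (⊤ : SimpleGraph (Fin 3)) : ℕ) : ℝ) ≤ ((n.choose 2 : ℕ) : ℝ) := by
        exact_mod_cast h
      gcongr
end
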